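/- arXiv:2509.09648 — 7 statements merged into one kernel-verified Lean document; each statement's English description precedes it below -/
import Mathlib

section
/- There exists p₀ > 1 such that for all p ≥ p₀ the first eigenvalue α₁(p) satisfies -1 < α₁(p)·μ_p² < 0, where μ_p = (p‖u_p‖_∞^{p-1})^{-1/2}; in particular -p‖u_p‖_∞^{p-1} < α₁(p) < 0 for all p large. -/
open Real Set Filter Topology

noncomputable section

/-- `u` is the (unique) positive solution of the one-dimensional Lane–Emden problem
`-u'' = u^p` on `(-1,1)` with `u(-1) = u(1) = 0`; it is even, positive on `(-1,1)`,
decreasing on `[0,1]`, and its sup norm is attained at `0`. -/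
def IsLaneEmden (p : ℝ) (u : ℝ → ℝ) : Prop :=
  ContDiff ℝ 2 u ∧
  (∀ t ∈ Ioo (-1 : ℝ) 1, deriv (deriv u) t = -(u t ^ p)) ∧
  u (-1) = 0 ∧ u 1 = 0 ∧
  (∀ t ∈ Ioo (-1 : ℝ) 1, 0 < u t) ∧
  (∀ t : ℝ, u (-t) = u t) ∧
  (∀ ⦃s t : ℝ⦄, s ∈ Icc (0 : ℝ) 1 → t ∈ Icc (0 : ℝ) 1 → s ≤ t → u t ≤ u s) ∧
  (∀ t ∈ Icc (-1 : ℝ) 1, u t ≤ u 0)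

/-- `α` is the first eigenvalue of the linearized operator `-d²/dt² - p u^(p-1)`
with Dirichlet boundary conditions on `(-1,1)`, characterized by the existence of a
positive eigenfunction. -/
def IsFirstEig (p : ℝ) (u : ℝ → ℝ) (α : ℝ) : Prop :=
  ∃ w : ℝ → ℝ, ContDiff ℝ 2 w ∧
    (∀ t ∈ Ioo (-1 : ℝ) 1, 0 < w t) ∧
    w (-1) = 0 ∧ w 1 = 0 ∧
    (∀ t ∈ Ioo (-1 : ℝ) 1, -(deriv (deriv w) t) - p * u t ^ (p - 1) * w t = α * w t)

/-- The rescaling parameter `μ_p = (p ‖u_p‖_∞^(p-1))^(-1/2)`. -/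
def mup (u : ℝ → ℝ → ℝ) (p : ℝ) : ℝ := (p * u p 0 ^ (p - 1)) ^ (-(1 / 2) : ℝ)

/-- The rescaled function `ũ_p(s) = p (u_p(μ_p s) - u_p(0)) / u_p(0)`. -/
def utilde (u : ℝ → ℝ → ℝ) (p : ℝ) (s : ℝ) : ℝ :=
  p * (u p (mup u p * s) - u p 0) / u p 0

/-- The limit profile `W(s) = log( 4 e^{√2 s} / (1 + e^{√2 s})² )`. -/
def W (s : ℝ) : ℝ :=
  Real.log (4 * Real.exp (Real.sqrt 2 * s) / (1 + Real.exp (Real.sqrt 2 * s)) ^ 2)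

/-- Key: for any p > 1, the eigenvalue satisfies the two strict bounds. -/
theorem key_bounds (p : ℝ) (hp : 1 < p) (U w : ℝ → ℝ) (a : ℝ)
    (hu2 : ContDiff ℝ 2 U)
    (hode : ∀ t ∈ Ioo (-1 : ℝ) 1, deriv (deriv U) t = -(U t ^ p))
    (hub1 : U (-1) = 0) (hub2 : U 1 = 0)
    (hupos : ∀ t ∈ Ioo (-1 : ℝ) 1, 0 < U t)
    (humax : ∀ t ∈ Icc (-1 : ℝ) 1, U t ≤ U 0)
    (hw2 : ContDiff ℝ 2 w)
    (hwpos : ∀ t ∈ Ioo (-1 : ℝ) 1, 0 < w t)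
    (hwb1 : w (-1) = 0) (hwb2 : w 1 = 0)
    (heig : ∀ t ∈ Ioo (-1 : ℝ) 1,
      -(deriv (deriv w) t) - p * U t ^ (p - 1) * w t = a * w t) :
    -(p * U 0 ^ (p - 1)) < a ∧ a < 0 := by
  have hp0 : (0 : ℝ) < p := by linarith
  have hu0 : 0 < U 0 := hupos 0 (by norm_num)
  have hK : 0 < U 0 ^ (p - 1) := rpow_pos_of_pos hu0 _
  -- derivative facts
  have hU1 : ContDiff ℝ 1 (deriv U) := by
    have : ContDiff ℝ (1 + 1) U := by norm_num [hu2]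
    exact (contDiff_succ_iff_deriv.mp this).2.2
  have hw1 : ContDiff ℝ 1 (deriv w) := by
    have : ContDiff ℝ (1 + 1) w := by norm_num [hw2]
    exact (contDiff_succ_iff_deriv.mp this).2.2
  have hUd : ∀ t : ℝ, HasDerivAt U (deriv U t) t := fun t =>
    ((hu2.differentiable (by norm_num)) t).hasDerivAt
  have hwd : ∀ t : ℝ, HasDerivAt w (deriv w t) t := fun t =>
    ((hw2.differentiable (by norm_num)) t).hasDerivAt
  have hUdd : ∀ t : ℝ, HasDerivAt (deriv U) (deriv (deriv U) t) t := fun t =>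
    ((hU1.differentiable one_ne_zero) t).hasDerivAt
  have hwdd : ∀ t : ℝ, HasDerivAt (deriv w) (deriv (deriv w) t) t := fun t =>
    ((hw1.differentiable one_ne_zero) t).hasDerivAt
  -- continuity of various functions
  have hUc : Continuous U := hu2.continuous
  have hwc : Continuous w := hw2.continuous
  have hUp : Continuous (fun t => U t ^ p) :=
    hUc.rpow_const (fun t => Or.inr hp0.le)
  -- the Wronskian-type function
  set F : ℝ → ℝ := fun t => U t * deriv w t - deriv U t * w t with hF
  -- g is the derivative of F on the open interval
  set g : ℝ → ℝ := fun t => (1 - p) * (U t ^ p * w t) - a * (U t * w t) with hg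
  have hgc : Continuous g := by
    apply Continuous.sub
    · exact continuous_const.mul (hUp.mul hwc)
    · exact continuous_const.mul (hUc.mul hwc)
  have hderiv : ∀ t ∈ Ioo (-1 : ℝ) 1, HasDerivAt F (g t) t := by
    intro t ht
    have h1 := (hUd t).mul (hwdd t)
    have h2 := (hUdd t).mul (hwd t)
    have h3 := h1.sub h2
    refine HasDerivAt.congr_deriv (f := F) h3 ?_
    have hw'' : deriv (deriv w) t = -(p * U t ^ (p - 1) * w t) - a * w t := by
      have := heig t ht; linarith
    have hu'' : deriv (deriv U) t = -(U t ^ p) := hode t ht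
    have hsplit : U t ^ p = U t ^ (p - 1) * U t := by
      rw [← Real.rpow_add_one (hupos t ht).ne']
      norm_num
    rw [hg]
    simp only [hw'', hu'', hsplit]
    ring
  -- FTC
  have hFTC : ∫ t in (-1 : ℝ)..1, g t = F 1 - F (-1) := by
    apply intervalIntegral.integral_eq_sub_of_hasDeriv_right_of_le (by norm_num)
    · exact (((hUc.mul hw1.continuous).sub (hU1.continuous.mul hwc))).continuousOn
    · exact fun x hx => (hderiv x hx).hasDerivWithinAt
    · exact hgc.intervalIntegrable _ _
  have hF0 : F 1 - F (-1) = 0 := by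
    simp [hF, hub1, hub2, hwb1, hwb2]
  -- integrals
  set A : ℝ := ∫ t in (-1 : ℝ)..1, U t ^ p * w t with hA
  set B : ℝ := ∫ t in (-1 : ℝ)..1, U t * w t with hB
  have hAint : IntervalIntegrable (fun t => U t ^ p * w t) MeasureTheory.volume (-1) 1 :=
    (hUp.mul hwc).intervalIntegrable _ _
  have hBint : IntervalIntegrable (fun t => U t * w t) MeasureTheory.volume (-1) 1 :=
    (hUc.mul hwc).intervalIntegrable _ _
  have hgsplit : ∫ t in (-1 : ℝ)..1, g t = (1 - p) * A - a * B := by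
    rw [hA, hB, ← intervalIntegral.integral_const_mul, ← intervalIntegral.integral_const_mul,
      ← intervalIntegral.integral_sub (hAint.const_mul _) (hBint.const_mul _)]
  have hkey : (1 - p) * A = a * B := by
    have := hFTC
    rw [hgsplit, hF0] at this
    linarith
  -- positivity of A and B
  have hApos : 0 < A := by
    apply intervalIntegral.intervalIntegral_pos_of_pos_on hAint _ (by norm_num)
    intro x hx
    exact mul_pos (rpow_pos_of_pos (hupos x hx) _) (hwpos x hx)
  have hBpos : 0 < B := by
    apply intervalIntegral.intervalIntegral_pos_of_pos_on hBint _ (by norm_num)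
    intro x hx
    exact mul_pos (hupos x hx) (hwpos x hx)
  -- comparison: A ≤ U 0 ^ (p-1) * B
  have hAB : A ≤ U 0 ^ (p - 1) * B := by
    rw [hA, hB, ← intervalIntegral.integral_const_mul]
    apply intervalIntegral.integral_mono_on (by norm_num) hAint (hBint.const_mul _)
    intro x hx
    rcases eq_or_lt_of_le hx.1 with h1 | h1
    · rw [← h1, hub1]
      rw [Real.zero_rpow (by positivity)]; ring_nf; simp
    rcases eq_or_lt_of_le hx.2 with h2 | h2
    · rw [h2, hub2]
      rw [Real.zero_rpow (by positivity)]; ring_nf; simp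
    have hxI : x ∈ Ioo (-1 : ℝ) 1 := ⟨h1, h2⟩
    have hux : 0 < U x := hupos x hxI
    have hwx : 0 ≤ w x := (hwpos x hxI).le
    have hsplit : U x ^ p = U x ^ (p - 1) * U x := by
      rw [← Real.rpow_add_one hux.ne']; norm_num
    rw [hsplit, ← mul_assoc]
    apply mul_le_mul_of_nonneg_right _ hwx
    apply mul_le_mul_of_nonneg_right _ hux.le
    exact Real.rpow_le_rpow hux.le (humax x (Ioo_subset_Icc_self hxI)) (by linarith)
  -- conclude
  constructor
  · nlinarith [mul_pos hK hBpos]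
  · nlinarith


/-- For `p` large, `-1 < α₁(p) μ_p² < 0`; in particular
`-p ‖u_p‖_∞^(p-1) < α₁(p) < 0`. -/
theorem first_eigenvalue_rescaled_bounds
    (u : ℝ → ℝ → ℝ) (α : ℝ → ℝ)
    (hu : ∀ p : ℝ, 1 < p → IsLaneEmden p (u p))
    (hα : ∀ p : ℝ, 1 < p → IsFirstEig p (u p) (α p)) :
    ∃ p₀ > (1 : ℝ), ∀ p ≥ p₀,
      (-1 < α p * (mup u p) ^ 2 ∧ α p * (mup u p) ^ 2 < 0) ∧
      (-(p * u p 0 ^ (p - 1)) < α p ∧ α p < 0) := by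
  refine ⟨2, one_lt_two, fun p hp => ?_⟩
  have hp1 : (1 : ℝ) < p := lt_of_lt_of_le one_lt_two hp
  obtain ⟨hu2, hode, hub1, hub2, hupos, _, _, humax⟩ := hu p hp1
  obtain ⟨w, hw2, hwpos, hwb1, hwb2, heig⟩ := hα p hp1
  obtain ⟨hlow, hneg⟩ := key_bounds p hp1 (u p) w (α p) hu2 hode hub1 hub2 hupos humax
    hw2 hwpos hwb1 hwb2 heig
  have hu0 : 0 < u p 0 := hupos 0 (by norm_num)
  have hc : 0 < p * u p 0 ^ (p - 1) := by
    have := rpow_pos_of_pos hu0 (p - 1); positivity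
  have hmup : mup u p ^ 2 = (p * u p 0 ^ (p - 1))⁻¹ := by
    rw [mup, ← Real.rpow_natCast (_ ^ _) 2, ← Real.rpow_mul hc.le]
    have h2 : ((-(1/2) : ℝ) * (2:ℕ)) = -1 := by push_cast; ring
    rw [h2, Real.rpow_neg_one]
  refine ⟨⟨?_, ?_⟩, hlow, hneg⟩
  · rw [hmup]
    rw [← div_eq_mul_inv, lt_div_iff₀ hc]
    nlinarith
  · rw [hmup]
    exact mul_neg_of_neg_of_pos hneg (inv_pos.mpr hc)
end
end

section
/- As p → 1⁺, the maximum of u_p satisfies ‖u_p‖_∞^{p-1} = u_p(0)^{p-1} → π²/4, where π²/4 is the first Dirichlet eigenvalue of -d²/dt² on (-1,1). -/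
open Real Set Filter Topology

noncomputable section

lemma diff_of_contDiff2 {u : ℝ → ℝ} (hu : ContDiff ℝ 2 u) :
    Differentiable ℝ u ∧ Differentiable ℝ (deriv u) := by
  have h2 : (2 : WithTop ℕ∞) = 1 + 1 := by norm_num
  rw [h2, contDiff_succ_iff_deriv] at hu
  exact ⟨hu.1, hu.2.2.differentiable (by norm_num)⟩

lemma hasDerivAt_wronskian {u : ℝ → ℝ} (hu : ContDiff ℝ 2 u) (k t : ℝ) :
    HasDerivAt (fun s => u s * (-(k * Real.sin (k * s))) - deriv u s * Real.cos (k * s))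
      (-(Real.cos (k * t)) * (k ^ 2 * u t + deriv (deriv u) t)) t := by
  obtain ⟨h1, h2⟩ := diff_of_contDiff2 hu
  have hkt : HasDerivAt (fun s : ℝ => k * s) k t := by
    simpa using (hasDerivAt_id t).const_mul k
  have hsin : HasDerivAt (fun s : ℝ => Real.sin (k * s)) (Real.cos (k * t) * k) t :=
    (Real.hasDerivAt_sin (k * t)).comp t hkt
  have hcos : HasDerivAt (fun s : ℝ => Real.cos (k * s)) (-Real.sin (k * t) * k) t :=
    (Real.hasDerivAt_cos (k * t)).comp t hkt
  have h := (((h1 t).hasDerivAt).mul ((hsin.const_mul k).neg)).sub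
    (((h2 t).hasDerivAt).mul hcos)
  exact h.congr_deriv (by simp only [Pi.neg_apply]; ring)

lemma rpow_split {x : ℝ} (hx : 0 < x) (p : ℝ) : x ^ p = x ^ (p - 1) * x := by
  nth_rewrite 1 [show p = (p - 1) + 1 by ring]
  rw [Real.rpow_add hx, Real.rpow_one]

/-- Sturm comparison lower bound: `π²/4 ≤ u 0 ^ (p-1)`. -/
lemma lane_emden_lower {p : ℝ} (hp : 1 < p) {u : ℝ → ℝ} (h : IsLaneEmden p u) :
    π ^ 2 / 4 ≤ u 0 ^ (p - 1) := by
  obtain ⟨hC2, hode, hm1, h1, hpos, heven, hdec, hmax⟩ := h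
  by_contra hcon
  push_neg at hcon
  set k : ℝ := π / 2 with hk
  have hk0 : 0 < k := by positivity
  set W : ℝ → ℝ := fun s => u s * (-(k * Real.sin (k * s))) - deriv u s * Real.cos (k * s)
    with hW
  have hWd : ∀ t, HasDerivAt W (-(Real.cos (k * t)) * (k ^ 2 * u t + deriv (deriv u) t)) t :=
    fun t => hasDerivAt_wronskian hC2 k t
  have hanti : StrictAntiOn W (Icc (-1 : ℝ) 1) := by
    apply strictAntiOn_of_deriv_neg (convex_Icc _ _)
    · exact (Differentiable.continuous (fun t => (hWd t).differentiableAt)).continuousOn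
    · intro t ht
      rw [interior_Icc] at ht
      rw [(hWd t).deriv, hode t ht]
      have hut : 0 < u t := hpos t ht
      have hcos : 0 < Real.cos (k * t) := by
        apply Real.cos_pos_of_mem_Ioo
        constructor
        · nlinarith [ht.1, pi_pos]
        · nlinarith [ht.2, pi_pos]
      have hk2 : k ^ 2 = π ^ 2 / 4 := by rw [hk]; ring
      have key : u t ^ (p - 1) < k ^ 2 := by
        rw [hk2]
        exact lt_of_le_of_lt
          (Real.rpow_le_rpow (le_of_lt hut) (hmax t (Ioo_subset_Icc_self ht)) (by linarith)) hcon
      have hprod : 0 < Real.cos (k * t) * (u t * (k ^ 2 - u t ^ (p - 1))) :=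
        mul_pos hcos (mul_pos hut (sub_pos.mpr key))
      rw [rpow_split hut p]
      nlinarith [hprod]
  have hWm1 : W (-1) = 0 := by
    show u (-1) * (-(k * Real.sin (k * (-1)))) - deriv u (-1) * Real.cos (k * (-1)) = 0
    rw [hm1, show k * (-1) = -(π / 2) by rw [hk]; ring, Real.cos_neg, Real.cos_pi_div_two]
    ring
  have hW1 : W 1 = 0 := by
    show u 1 * (-(k * Real.sin (k * 1))) - deriv u 1 * Real.cos (k * 1) = 0
    rw [h1, show k * 1 = π / 2 by rw [hk]; ring, Real.cos_pi_div_two]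
    ring
  have := hanti (by constructor <;> norm_num : (-1:ℝ) ∈ Icc (-1:ℝ) 1)
    (by constructor <;> norm_num : (1:ℝ) ∈ Icc (-1:ℝ) 1) (by norm_num)
  rw [hWm1, hW1] at this
  exact lt_irrefl 0 this

/-- Sturm comparison upper bound at an interior point `a`. -/
lemma lane_emden_upper_at {p : ℝ} (hp : 1 < p) {u : ℝ → ℝ} (h : IsLaneEmden p u)
    {a : ℝ} (ha : a ∈ Ioo (0 : ℝ) 1) :
    u a ^ (p - 1) ≤ π ^ 2 / (4 * a ^ 2) := by
  obtain ⟨hC2, hode, hm1, h1, hpos, heven, hdec, hmax⟩ := h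
  by_contra hcon
  push_neg at hcon
  obtain ⟨ha0, ha1⟩ := ha
  set k : ℝ := π / (2 * a) with hk
  have hk0 : 0 < k := by rw [hk]; positivity
  have hka : k * a = π / 2 := by rw [hk]; field_simp
  have hk2 : k ^ 2 = π ^ 2 / (4 * a ^ 2) := by rw [hk]; field_simp; ring
  set W : ℝ → ℝ := fun s => u s * (-(k * Real.sin (k * s))) - deriv u s * Real.cos (k * s)
    with hW
  have hWd : ∀ t, HasDerivAt W (-(Real.cos (k * t)) * (k ^ 2 * u t + deriv (deriv u) t)) t :=
    fun t => hasDerivAt_wronskian hC2 k t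
  have hua : 0 < u a := hpos a ⟨by linarith, ha1⟩
  have hmono : StrictMonoOn W (Icc (-a) a) := by
    apply strictMonoOn_of_deriv_pos (convex_Icc _ _)
    · exact (Differentiable.continuous (fun t => (hWd t).differentiableAt)).continuousOn
    · intro t ht
      rw [interior_Icc] at ht
      have ht1 : t ∈ Ioo (-1 : ℝ) 1 := ⟨by linarith [ht.1], by linarith [ht.2]⟩
      rw [(hWd t).deriv, hode t ht1]
      have hut : 0 < u t := hpos t ht1
      have hcos : 0 < Real.cos (k * t) := by
        apply Real.cos_pos_of_mem_Ioo
        constructor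
        · rw [show -(π / 2) = k * (-a) by rw [← hka]; ring]
          exact mul_lt_mul_of_pos_left ht.1 hk0
        · rw [← hka]
          exact mul_lt_mul_of_pos_left ht.2 hk0
      have huta : u a ≤ u t := by
        rcases le_or_gt 0 t with htn | htn
        · exact hdec ⟨htn, by linarith [ht.2]⟩ ⟨le_of_lt ha0, le_of_lt ha1⟩ (le_of_lt ht.2)
        · rw [← heven t]
          exact hdec ⟨by linarith [ht.1], by linarith [ht.1]⟩ ⟨le_of_lt ha0, le_of_lt ha1⟩
            (by linarith [ht.1])
      have hge : k ^ 2 < u t ^ (p - 1) := by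
        calc k ^ 2 = π ^ 2 / (4 * a ^ 2) := hk2
        _ < u a ^ (p - 1) := hcon
        _ ≤ u t ^ (p - 1) := Real.rpow_le_rpow (le_of_lt hua) huta (by linarith)
      have hprod : 0 < Real.cos (k * t) * (u t * (u t ^ (p - 1) - k ^ 2)) :=
        mul_pos hcos (mul_pos hut (sub_pos.mpr hge))
      rw [rpow_split hut p]
      nlinarith [hprod]
  have hWa : W a = -(k * u a) := by
    show u a * (-(k * Real.sin (k * a))) - deriv u a * Real.cos (k * a) = -(k * u a)
    rw [hka, Real.sin_pi_div_two, Real.cos_pi_div_two]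
    ring
  have hWma : W (-a) = k * u a := by
    show u (-a) * (-(k * Real.sin (k * (-a)))) - deriv u (-a) * Real.cos (k * (-a)) = k * u a
    rw [show k * (-a) = -(π / 2) by rw [← hka]; ring, Real.sin_neg, Real.cos_neg,
      Real.sin_pi_div_two, Real.cos_pi_div_two, heven a]
    ring
  have := hmono (by constructor <;> linarith : -a ∈ Icc (-a) a)
    (by constructor <;> linarith : a ∈ Icc (-a) a) (by linarith)
  rw [hWa, hWma] at this
  nlinarith [mul_pos hk0 hua]

/-- Concavity bound: `(1 - a) * u 0 ≤ u a` for `a ∈ [0,1]`. -/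
lemma lane_emden_concave {p : ℝ} (hp : 1 < p) {u : ℝ → ℝ} (h : IsLaneEmden p u)
    {a : ℝ} (ha : a ∈ Icc (0 : ℝ) 1) : (1 - a) * u 0 ≤ u a := by
  obtain ⟨hC2, hode, hm1, h1, hpos, heven, hdec, hmax⟩ := h
  obtain ⟨hd1, hd2⟩ := diff_of_contDiff2 hC2
  have hconc : ConcaveOn ℝ (Icc (-1 : ℝ) 1) u := by
    apply concaveOn_of_deriv2_nonpos (convex_Icc _ _) hC2.continuous.continuousOn
      hd1.differentiableOn hd2.differentiableOn
    intro x hx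
    rw [interior_Icc] at hx
    show deriv (deriv u) x ≤ 0
    rw [hode x hx]
    have : (0 : ℝ) < u x ^ p := Real.rpow_pos_of_pos (hpos x hx) p
    linarith
  have key := hconc.2 (show (0:ℝ) ∈ Icc (-1:ℝ) 1 by constructor <;> norm_num)
    (show (1:ℝ) ∈ Icc (-1:ℝ) 1 by constructor <;> norm_num)
    (show (0:ℝ) ≤ 1 - a by linarith [ha.2]) ha.1 (by ring)
  simpa [h1, smul_eq_mul] using key

/-- As `p → 1⁺`, `‖u_p‖_∞^(p-1) → π²/4`, the first Dirichlet eigenvalue of `-d²/dt²`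
on `(-1,1)`. -/
theorem sup_norm_pow_tendsto_pi_sq_div_four
    (u : ℝ → ℝ → ℝ) (hu : ∀ p : ℝ, 1 < p → IsLaneEmden p (u p)) :
    Tendsto (fun p : ℝ => u p 0 ^ (p - 1)) (𝓝[>] (1 : ℝ)) (𝓝 (π ^ 2 / 4)) := by
  rw [Metric.tendsto_nhds]
  intro ε hε
  have hπ : (0 : ℝ) < π := pi_pos
  set c : ℝ := 1 + 2 * ε / π ^ 2 with hc
  have hc1 : 1 < c := by
    have : 0 < 2 * ε / π ^ 2 := by positivity
    rw [hc]; linarith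
  have hc0 : (0 : ℝ) < c := by linarith
  set a : ℝ := (Real.sqrt c)⁻¹ with haa
  have hsq1 : 1 < Real.sqrt c := by
    rw [show (1 : ℝ) = Real.sqrt 1 by simp]
    exact Real.sqrt_lt_sqrt (by norm_num) hc1
  have ha0 : 0 < a := by rw [haa]; positivity
  have ha1 : a < 1 := by rw [haa]; exact inv_lt_one_of_one_lt₀ hsq1
  have ha2 : π ^ 2 / (4 * a ^ 2) = π ^ 2 / 4 + ε / 2 := by
    have hx : a ^ 2 = c⁻¹ := by rw [haa, inv_pow, Real.sq_sqrt hc0.le]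
    rw [hx, hc]
    have hπ' : π ≠ 0 := pi_ne_zero
    field_simp
    ring
  have hb0 : 0 < 1 - a := by linarith
  have htend : Tendsto (fun q : ℝ => (π ^ 2 / 4 + ε / 2) * (1 - a) ^ (1 - q)) (𝓝[>] (1:ℝ))
      (𝓝 (π ^ 2 / 4 + ε / 2)) := by
    have hcont : ContinuousAt (fun q : ℝ => (1 - a) ^ (1 - q)) 1 :=
      (Real.continuousAt_const_rpow (ne_of_gt hb0)).comp
        ((continuous_const.sub continuous_id).continuousAt)
    have := hcont.tendsto.mono_left (nhdsWithin_le_nhds (s := Ioi (1:ℝ)))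
    rw [show ((1:ℝ) - 1) = (0:ℝ) by norm_num] at this
    have h1 : Tendsto (fun q : ℝ => (1 - a) ^ (1 - q)) (𝓝[>] (1:ℝ)) (𝓝 1) := by
      simpa using this
    have := h1.const_mul (π ^ 2 / 4 + ε / 2)
    simpa using this
  have heps : ∀ᶠ q in 𝓝[>] (1:ℝ),
      (π ^ 2 / 4 + ε / 2) * (1 - a) ^ (1 - q) < π ^ 2 / 4 + ε :=
    htend.eventually_lt_const (by linarith)
  filter_upwards [heps, self_mem_nhdsWithin] with q hq hq1
  have hq1' : 1 < q := hq1
  have hle := hu q hq1'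
  have hlow : π ^ 2 / 4 ≤ u q 0 ^ (q - 1) := lane_emden_lower hq1' hle
  have h0pos : 0 < u q 0 := hle.2.2.2.2.1 0 (by constructor <;> norm_num)
  have hapos : 0 < u q a := hle.2.2.2.2.1 a ⟨by linarith, ha1⟩
  have hcb : (1 - a) * u q 0 ≤ u q a := lane_emden_concave hq1' hle ⟨ha0.le, ha1.le⟩
  have hup : u q 0 ^ (q - 1) ≤ (π ^ 2 / (4 * a ^ 2)) * (1 - a) ^ (1 - q) := by
    have hdiv : u q 0 ≤ u q a / (1 - a) := (le_div_iff₀ hb0).mpr (by linarith [hcb])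
    calc u q 0 ^ (q - 1) ≤ (u q a / (1 - a)) ^ (q - 1) :=
          Real.rpow_le_rpow h0pos.le hdiv (by linarith)
      _ = u q a ^ (q - 1) / (1 - a) ^ (q - 1) := Real.div_rpow hapos.le hb0.le _
      _ ≤ (π ^ 2 / (4 * a ^ 2)) / (1 - a) ^ (q - 1) := by
          gcongr
          exact lane_emden_upper_at hq1' hle ⟨ha0, ha1⟩
      _ = (π ^ 2 / (4 * a ^ 2)) * (1 - a) ^ (1 - q) := by
          rw [show (1 : ℝ) - q = -(q - 1) by ring, Real.rpow_neg hb0.le, div_eq_mul_inv]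
  rw [ha2] at hup
  rw [Real.dist_eq, abs_lt]
  constructor
  · linarith
  · linarith
end
end

section
/- As p → 1⁺, the normalized solutions converge in C¹([-1,1]) to the first Dirichlet eigenfunction: sup_{t ∈ [-1,1]} |u_p(t)/‖u_p‖_∞ - cos(πt/2)| → 0 and sup_{t ∈ [-1,1]} |(u_p/‖u_p‖_∞)'(t) - (-(π/2)sin(πt/2))| → 0 as p → 1⁺. -/
open Real Set Filter Topology

noncomputable section

namespace LE1

variable {p : ℝ} {u : ℝ → ℝ}

/-- The normalized solution `w = u / u 0`. -/
def w (u : ℝ → ℝ) : ℝ → ℝ := fun t => u t / u 0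

lemma M_pos (hu : IsLaneEmden p u) : 0 < u 0 :=
  hu.2.2.2.2.1 0 ⟨by norm_num, by norm_num⟩

lemma w_contDiff (hu : IsLaneEmden p u) : ContDiff ℝ 2 (w u) :=
  hu.1.div_const _

lemma deriv_w_contDiff (hu : IsLaneEmden p u) : ContDiff ℝ 1 (deriv (w u)) := by
  have h2 : ContDiff ℝ (1+1 : ℕ) (w u) := by
    have := w_contDiff hu; norm_num at this ⊢; exact this
  exact (contDiff_succ_iff_deriv.mp h2).2.2

lemma w_zero (hu : IsLaneEmden p u) : w u 0 = 1 :=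
  div_self (M_pos hu).ne'

lemma w_one (hu : IsLaneEmden p u) : w u 1 = 0 := by
  simp [w, hu.2.2.2.1]

lemma w_neg_one (hu : IsLaneEmden p u) : w u (-1) = 0 := by
  simp [w, hu.2.2.1]

lemma w_pos (hu : IsLaneEmden p u) {t : ℝ} (ht : t ∈ Ioo (-1 : ℝ) 1) : 0 < w u t :=
  div_pos (hu.2.2.2.2.1 t ht) (M_pos hu)

lemma w_le_one (hu : IsLaneEmden p u) {t : ℝ} (ht : t ∈ Icc (-1 : ℝ) 1) : w u t ≤ 1 :=
  (div_le_one (M_pos hu)).mpr (hu.2.2.2.2.2.2.2 t ht)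

lemma w_even (hu : IsLaneEmden p u) (t : ℝ) : w u (-t) = w u t := by
  simp [w, hu.2.2.2.2.2.1]

lemma w_ode (hp : 1 < p) (hu : IsLaneEmden p u) {t : ℝ} (ht : t ∈ Ioo (-1 : ℝ) 1) :
    deriv (deriv (w u)) t = -((u 0) ^ (p-1) * (w u t) ^ p) := by
  have hM := M_pos hu
  have hd1 : deriv (w u) = fun s => deriv u s / u 0 := by
    funext s; exact deriv_div_const _
  have hd2 : deriv (deriv (w u)) t = deriv (deriv u) t / u 0 := by
    rw [hd1]; exact deriv_div_const _
  rw [hd2, hu.2.1 t ht]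
  have hut : u t = u 0 * w u t := by simp only [w]; field_simp
  have hwt : 0 < w u t := w_pos hu ht
  rw [hut, Real.mul_rpow hM.le hwt.le]
  have : (u 0) ^ p = (u 0) ^ (p-1) * u 0 := by
    rw [show p = p-1+1 by ring, Real.rpow_add hM, Real.rpow_one]
    ring_nf
  rw [this]
  field_simp

lemma deriv_even {f : ℝ → ℝ} (hf : Differentiable ℝ f) (he : ∀ t, f (-t) = f t) (t : ℝ) :
    deriv f (-t) = - deriv f t := by
  have h1 : HasDerivAt (fun s : ℝ => f (-s)) (deriv f (-t) * (-1)) t :=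
    ((hf (-t)).hasDerivAt).comp t (hasDerivAt_neg t)
  have heq : (fun s : ℝ => f (-s)) = f := funext he
  rw [heq] at h1
  have := h1.deriv
  linarith [this]

lemma w_lower (hp : 1 < p) (hu : IsLaneEmden p u) :
    ∀ t ∈ Icc (-1:ℝ) 1, 1 - |t| ≤ w u t := by
  have hc := w_contDiff hu
  have hconc : ConcaveOn ℝ (Icc (-1:ℝ) 1) (w u) := by
    apply concaveOn_of_deriv2_nonpos (convex_Icc _ _) (hc.continuous.continuousOn)
      ((hc.differentiable (by norm_num)).differentiableOn)
      (((hc.iterate_deriv' 1 1).differentiable (by norm_num)).differentiableOn)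
    intro x hx
    rw [interior_Icc] at hx
    have h2 : deriv (deriv (w u)) x ≤ 0 := by
      rw [w_ode hp hu hx]
      have := Real.rpow_nonneg (w_pos hu hx).le p
      have := Real.rpow_nonneg (M_pos hu).le (p-1)
      nlinarith
    simpa [Function.iterate_succ, Function.iterate_one] using h2
  have key : ∀ t ∈ Icc (0:ℝ) 1, 1 - t ≤ w u t := by
    intro t ht
    have h := hconc.2 (show (0:ℝ) ∈ Icc (-1:ℝ) 1 from ⟨by norm_num, by norm_num⟩)
      (show (1:ℝ) ∈ Icc (-1:ℝ) 1 from ⟨by norm_num, by norm_num⟩)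
      (show (0:ℝ) ≤ 1 - t from by linarith [ht.2]) ht.1 (by ring)
    simpa [w_zero hu, w_one hu] using h
  intro t ht
  rcases le_or_gt 0 t with h0 | h0
  · simpa [abs_of_nonneg h0] using key t ⟨h0, ht.2⟩
  · have := key (-t) ⟨by linarith, by linarith [ht.1]⟩
    rw [w_even hu] at this
    simpa [abs_of_neg h0] using this

lemma wronskian_hasDeriv (hu : IsLaneEmden p u) (μ t : ℝ) :
    HasDerivAt (fun s => deriv (w u) s * Real.cos (μ*s) + w u s * (μ * Real.sin (μ*s)))
      (deriv (deriv (w u)) t * Real.cos (μ*t) + μ^2 * (w u t * Real.cos (μ*t))) t := by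
  have hA : HasDerivAt (deriv (w u)) (deriv (deriv (w u)) t) t :=
    ((deriv_w_contDiff hu).differentiable one_ne_zero t).hasDerivAt
  have hw : HasDerivAt (w u) (deriv (w u) t) t :=
    ((w_contDiff hu).differentiable (by norm_num) t).hasDerivAt
  have hg : HasDerivAt (fun s : ℝ => μ*s) μ t := by
    simpa using (hasDerivAt_id t).const_mul μ
  have hcos : HasDerivAt (fun s => Real.cos (μ*s)) (-Real.sin (μ*t) * μ) t :=
    (Real.hasDerivAt_cos (μ*t)).comp t hg
  have hsin : HasDerivAt (fun s => Real.sin (μ*s)) (Real.cos (μ*t) * μ) t :=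
    (Real.hasDerivAt_sin (μ*t)).comp t hg
  have h := (hA.fun_mul hcos).fun_add (hw.fun_mul (hsin.const_mul μ))
  exact h.congr_deriv (by ring)

lemma rpow_split {x : ℝ} (hx : 0 < x) : x ^ p = x ^ (p-1) * x := by
  rw [show p = p-1+1 by ring, Real.rpow_add hx, Real.rpow_one]
  ring_nf

lemma lam_lower (hp : 1 < p) (hu : IsLaneEmden p u) : π^2/4 ≤ (u 0) ^ (p-1) := by
  by_contra hcon
  push_neg at hcon
  set lam := (u 0) ^ (p-1) with hlam
  have hlam0 : 0 ≤ lam := Real.rpow_nonneg (M_pos hu).le _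
  set W : ℝ → ℝ := fun s => deriv (w u) s * Real.cos ((π/2)*s) + w u s * ((π/2) * Real.sin ((π/2)*s)) with hWdef
  have hWc : Continuous W := by
    have hdc : Continuous (deriv (w u)) := (deriv_w_contDiff hu).continuous
    have hwc : Continuous (w u) := (w_contDiff hu).continuous
    fun_prop
  have hmono : StrictMonoOn W (Icc (-1:ℝ) 1) := by
    apply strictMonoOn_of_deriv_pos (convex_Icc _ _) hWc.continuousOn
    intro x hx
    rw [interior_Icc] at hx
    rw [(wronskian_hasDeriv hu (π/2) x).deriv, w_ode hp hu hx]
    have hwx := w_pos hu hx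
    have hcos : 0 < Real.cos ((π/2)*x) := by
      apply Real.cos_pos_of_mem_Ioo
      constructor
      · nlinarith [pi_pos, hx.1, hx.2]
      · nlinarith [pi_pos, hx.1, hx.2]
    have hw1 := w_le_one hu (Ioo_subset_Icc_self hx)
    have hwp1 : (w u x)^(p-1) ≤ 1 := Real.rpow_le_one hwx.le hw1 (by linarith)
    have hsplit : (w u x)^p = (w u x)^(p-1) * w u x := rpow_split hwx
    have hwpnn : 0 ≤ (w u x)^(p-1) := Real.rpow_nonneg hwx.le _
    rw [hsplit]
    have hkey : lam * (w u x)^(p-1) < (π/2)^2 := by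
      have : lam * (w u x)^(p-1) ≤ lam := by nlinarith
      nlinarith
    nlinarith [mul_pos hwx hcos]
  have hend : W (-1) = 0 ∧ W 1 = 0 := by
    constructor
    · simp [hWdef, w_neg_one hu, show (π/2)*(-1:ℝ) = -(π/2) by ring, Real.cos_pi_div_two]
    · simp [hWdef, w_one hu, show (π/2)*(1:ℝ) = π/2 by ring, Real.cos_pi_div_two]
  have := hmono (show (-1:ℝ) ∈ Icc (-1:ℝ) 1 from ⟨le_refl _, by norm_num⟩)
    (show (1:ℝ) ∈ Icc (-1:ℝ) 1 from ⟨by norm_num, le_refl _⟩) (by norm_num)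
  rw [hend.1, hend.2] at this
  exact lt_irrefl 0 this

lemma lam_upper (hp : 1 < p) (hu : IsLaneEmden p u) {η : ℝ} (hη0 : 0 < η) (hη1 : η < 1) :
    (u 0) ^ (p-1) * η ^ (p-1) ≤ (π/(2*(1-η)))^2 := by
  by_contra hcon
  push_neg at hcon
  set lam := (u 0) ^ (p-1) with hlam
  set a : ℝ := 1 - η with ha
  set μ : ℝ := π/(2*(1-η)) with hμ
  have ha0 : 0 < a := by simp [ha]; linarith
  have ha1 : a < 1 := by simp [ha]; linarith
  have hμ0 : 0 < μ := by
    apply div_pos pi_pos; linarith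
  have hμa : μ * a = π/2 := by
    rw [hμ, ha, div_mul_eq_mul_div, mul_div_mul_right _ _ (show (1:ℝ)-η ≠ 0 by linarith)]
  set W : ℝ → ℝ := fun s => deriv (w u) s * Real.cos (μ*s) + w u s * (μ * Real.sin (μ*s)) with hWdef
  have hWc : Continuous W := by
    have hdc : Continuous (deriv (w u)) := (deriv_w_contDiff hu).continuous
    have hwc : Continuous (w u) := (w_contDiff hu).continuous
    fun_prop
  have hanti : StrictAntiOn W (Icc (-a) a) := by
    apply strictAntiOn_of_deriv_neg (convex_Icc _ _) hWc.continuousOn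
    intro x hx
    rw [interior_Icc] at hx
    have hxI : x ∈ Ioo (-1:ℝ) 1 := ⟨by linarith [hx.1], by linarith [hx.2]⟩
    rw [(wronskian_hasDeriv hu μ x).deriv, w_ode hp hu hxI]
    have hwx := w_pos hu hxI
    have hcos : 0 < Real.cos (μ*x) := by
      apply Real.cos_pos_of_mem_Ioo
      constructor
      · nlinarith [hx.1, hx.2, mul_lt_mul_of_pos_left hx.1 hμ0]
      · nlinarith [mul_lt_mul_of_pos_left hx.2 hμ0]
    have hwη : η ≤ w u x := by
      have h1 := w_lower hp hu x (Ioo_subset_Icc_self hxI)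
      have : |x| ≤ a := abs_le.mpr ⟨hx.1.le, hx.2.le⟩
      have : 1 - |x| ≥ η := by simp [ha] at this ⊢; linarith
      linarith
    have hwp : η^(p-1) ≤ (w u x)^(p-1) := Real.rpow_le_rpow hη0.le hwη (by linarith)
    have hsplit : (w u x)^p = (w u x)^(p-1) * w u x := rpow_split hwx
    rw [hsplit]
    have hlam0 : 0 ≤ lam := Real.rpow_nonneg (M_pos hu).le _
    have hkey : μ^2 < lam * (w u x)^(p-1) := by
      have : lam * η^(p-1) ≤ lam * (w u x)^(p-1) := by nlinarith
      nlinarith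
    nlinarith [mul_pos hwx hcos]
  have hWa : W a = μ * w u a := by
    simp [hWdef, hμa, Real.cos_pi_div_two, Real.sin_pi_div_two]
    ring
  have hWna : W (-a) = -(μ * w u (-a)) := by
    have h1 : μ * (-a) = -(π/2) := by rw [mul_neg, hμa]
    simp [hWdef, h1, Real.cos_pi_div_two, Real.sin_pi_div_two]
    ring
  have hwa : 0 < w u a := w_pos hu ⟨by linarith, ha1⟩
  have hwna : 0 < w u (-a) := w_pos hu ⟨by linarith, by linarith⟩
  have := hanti (show -a ∈ Icc (-a) a from ⟨le_refl _, by linarith⟩)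
    (show a ∈ Icc (-a) a from ⟨by linarith, le_refl _⟩) (by linarith)
  rw [hWa, hWna] at this
  nlinarith [mul_pos hμ0 hwa, mul_pos hμ0 hwna]

lemma rpow_close (hp : 1 < p) {x : ℝ} (h0 : 0 ≤ x) (h1 : x ≤ 1) :
    x ^ p ≤ x ∧ x - x ^ p ≤ p - 1 := by
  rcases h0.eq_or_lt with h | h
  · rw [← h, Real.zero_rpow (by positivity : p ≠ 0)]
    constructor <;> linarith
  · constructor
    · have := Real.rpow_le_rpow_of_exponent_ge h h1 hp.le
      simpa using this
    · have hexp : Real.log x * (p-1) + 1 ≤ x ^ (p-1) := by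
        rw [Real.rpow_def_of_pos h]
        exact Real.add_one_le_exp _
      have hsplit : x ^ p = x ^ (p-1) * x := rpow_split h
      have hlog : Real.log x⁻¹ ≤ x⁻¹ - 1 := Real.log_le_sub_one_of_pos (by positivity)
      rw [Real.log_inv] at hlog
      have hxinv : x * x⁻¹ = 1 := mul_inv_cancel₀ h.ne'
      have step1 : x - x ^ p ≤ (p-1) * (x * (-Real.log x)) := by
        have := mul_le_mul_of_nonneg_left hexp h.le
        nlinarith [hsplit]
      have step2 : x * (-Real.log x) ≤ 1 - x := by
        have := mul_le_mul_of_nonneg_left hlog h.le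
        nlinarith
      nlinarith

lemma G_bound {lam wx p wp : ℝ} (hp : 1 < p) (hll : π^2/4 ≤ lam)
    (hq1 : wp ≤ wx) (hq2 : wx - wp ≤ p - 1) (hwp0 : 0 ≤ wp) (hw1 : wx ≤ 1) :
    |(-(lam * wp) + (π/2)^2 * wx)| ≤ π^2/4*(p-1) + (lam - π^2/4) := by
  have hwp1 : wp ≤ 1 := le_trans hq1 hw1
  rw [abs_le]
  constructor
  · nlinarith [mul_nonneg (sub_nonneg.2 hll) hwp0]
  · nlinarith [mul_le_of_le_one_right (sub_nonneg.2 hll) hwp1,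
      mul_nonneg (sub_nonneg.2 hll) hwp0]

lemma gronwall_aux {d D G : ℝ → ℝ} {R : ℝ} (hR0 : 0 ≤ R)
    (hd' : ∀ t, HasDerivAt d (D t) t)
    (hD' : ∀ t ∈ Ioo (-1:ℝ) 1, HasDerivAt D (G t - (π/2)^2 * d t) t)
    (hGb : ∀ t ∈ Ioo (-1:ℝ) 1, |G t| ≤ R)
    (hd0 : d 0 = 0) (hD0 : D 0 = 0)
    (hdeven : ∀ t, d (-t) = d t)
    (hDc : Continuous D) :
    ∀ t ∈ Icc (-1:ℝ) 1, |d t| ≤ R ∧ |D t| ≤ 2*R := by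
  have hπ := Real.pi_gt_three
  have hddiff : Differentiable ℝ d := fun t => (hd' t).differentiableAt
  have hdc : Continuous d := hddiff.continuous
  have hFc : Continuous (fun t => D t^2 + (π/2)^2 * d t^2) := by fun_prop
  have hF' : ∀ t ∈ Ioo (-1:ℝ) 1,
      HasDerivAt (fun t => D t^2 + (π/2)^2 * d t^2) (2 * D t * G t) t := by
    intro t ht
    have h := (((hD' t ht).fun_pow 2)).fun_add (((hd' t).fun_pow 2).const_mul ((π/2)^2))
    exact h.congr_deriv (by push_cast; ring)
  have hgr : ∀ x ∈ Icc (0:ℝ) 1, D x^2 + (π/2)^2 * d x^2 ≤ 2 * R^2 := by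
    have hbound : ∀ x ∈ Ico (0:ℝ) 1, ‖2 * D x * G x‖ ≤ 1 * ‖D x^2 + (π/2)^2 * d x^2‖ + R^2 := by
      intro x hx
      have hxI : x ∈ Ioo (-1:ℝ) 1 := ⟨by linarith [hx.1], hx.2⟩
      have hG := abs_le.mp (hGb x hxI)
      have hG2 : (G x)^2 ≤ R^2 := by nlinarith
      have hFnn : (0:ℝ) ≤ D x^2 + (π/2)^2 * d x^2 := by positivity
      rw [Real.norm_eq_abs, Real.norm_eq_abs, abs_of_nonneg hFnn, abs_le]
      constructor
      · nlinarith [sq_nonneg (D x + G x), sq_nonneg (π * d x)]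
      · nlinarith [sq_nonneg (D x - G x), sq_nonneg (π * d x)]
    have hmain := norm_le_gronwallBound_of_norm_deriv_right_le (f' := fun x => 2 * D x * G x)
      (δ := 0) (K := 1) (ε := R^2) (a := 0) (b := 1)
      hFc.continuousOn
      (fun x hx => (hF' x ⟨by linarith [hx.1], hx.2⟩).hasDerivWithinAt)
      (by simp [hd0, hD0]) hbound
    intro x hx
    have h := hmain x hx
    have hFnn : (0:ℝ) ≤ D x^2 + (π/2)^2 * d x^2 := by positivity
    rw [Real.norm_eq_abs, abs_of_nonneg hFnn] at h
    refine h.trans ?_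
    rw [gronwallBound_of_K_ne_0 one_ne_zero]
    have hex : Real.exp (1 * (x - 0)) ≤ Real.exp 1 := by
      apply Real.exp_le_exp.mpr
      linarith [hx.2]
    have he1 : Real.exp 1 < 2.7182818286 := Real.exp_one_lt_d9
    nlinarith [sq_nonneg R, Real.exp_pos (1 * (x - 0))]
  have hDeven : ∀ t, D (-t) = - D t := by
    intro t
    have h1 : deriv d (-t) = - deriv d t := deriv_even hddiff hdeven t
    rw [(hd' (-t)).deriv, (hd' t).deriv] at h1
    exact h1
  have hFb : ∀ t ∈ Icc (-1:ℝ) 1, D t^2 + (π/2)^2 * d t^2 ≤ 2 * R^2 := by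
    intro t ht
    rcases le_or_gt 0 t with h0 | h0
    · exact hgr t ⟨h0, ht.2⟩
    · have h := hgr (-t) ⟨by linarith, by linarith [ht.1]⟩
      rw [hdeven t, hDeven t] at h
      calc D t^2 + (π/2)^2 * d t^2 = (-D t)^2 + (π/2)^2 * d t^2 := by ring
      _ ≤ 2*R^2 := h
  intro t ht
  have hF2 := hFb t ht
  have hDsq : (D t)^2 ≤ 2 * R^2 := by nlinarith [sq_nonneg (π * d t)]
  have hdsq : (d t)^2 ≤ R^2 := by
    nlinarith [mul_le_mul_of_nonneg_right (show (9:ℝ) ≤ π^2 by nlinarith) (sq_nonneg (d t)),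
      sq_nonneg (D t)]
  constructor
  · exact abs_le.mpr (abs_le_of_sq_le_sq' hdsq hR0)
  · have h2 : (D t)^2 ≤ (2*R)^2 := by nlinarith
    exact abs_le.mpr (abs_le_of_sq_le_sq' h2 (by linarith))

lemma key (hp : 1 < p) (hu : IsLaneEmden p u) {ε : ℝ} (hε : 0 < ε)
    (hr : π^2/4 * (p-1) + ((u 0)^(p-1) - π^2/4) < ε/2) :
    ∀ t ∈ Icc (-1:ℝ) 1,
      |u t / u 0 - Real.cos (π * t / 2)| < ε ∧
      |deriv (fun s : ℝ => u s / u 0) t - (-(π / 2) * Real.sin (π * t / 2))| < ε := by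
  obtain ⟨lam, hlam⟩ : ∃ l : ℝ, l = (u 0)^(p-1) := ⟨_, rfl⟩
  rw [← hlam] at hr
  have hll : π^2/4 ≤ lam := hlam ▸ lam_lower hp hu
  have hR0 : 0 ≤ π^2/4*(p-1) + (lam - π^2/4) := by
    nlinarith [mul_nonneg (show (0:ℝ) ≤ π^2/4 by positivity) (show (0:ℝ) ≤ p-1 by linarith)]
  have hwdiff : Differentiable ℝ (w u) := (w_contDiff hu).differentiable (by norm_num)
  have hw' : ∀ t, HasDerivAt (w u) (deriv (w u) t) t := fun t => (hwdiff t).hasDerivAt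
  have hA : ∀ t, HasDerivAt (deriv (w u)) (deriv (deriv (w u)) t) t := fun t =>
    ((deriv_w_contDiff hu).differentiable one_ne_zero t).hasDerivAt
  have hg : ∀ t : ℝ, HasDerivAt (fun s : ℝ => π * s / 2) (π/2) t := by
    intro t
    simpa using ((hasDerivAt_id t).const_mul π).div_const 2
  have hc' : ∀ t : ℝ, HasDerivAt (fun s : ℝ => Real.cos (π*s/2)) (-Real.sin (π*t/2) * (π/2)) t :=
    fun t => by have := (Real.hasDerivAt_cos (π*t/2)).comp t (hg t); exact this
  have hs' : ∀ t : ℝ, HasDerivAt (fun s : ℝ => Real.sin (π*s/2)) (Real.cos (π*t/2) * (π/2)) t :=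
    fun t => by have := (Real.hasDerivAt_sin (π*t/2)).comp t (hg t); exact this
  have hd' : ∀ t, HasDerivAt (fun s => w u s - Real.cos (π*s/2))
      (deriv (w u) t + Real.sin (π*t/2) * (π/2)) t := by
    intro t
    have h := (hw' t).fun_sub (hc' t)
    exact h.congr_deriv (by ring)
  have hD' : ∀ t ∈ Ioo (-1:ℝ) 1,
      HasDerivAt (fun s => deriv (w u) s + Real.sin (π*s/2) * (π/2))
        ((-(lam * (w u t)^p) + (π/2)^2 * w u t) - (π/2)^2 * (w u t - Real.cos (π*t/2))) t := by
    intro t ht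
    have h := (hA t).fun_add ((hs' t).mul_const (π/2))
    rw [w_ode hp hu ht] at h
    exact h.congr_deriv (by rw [hlam]; ring)
  have hGb : ∀ t ∈ Ioo (-1:ℝ) 1,
      |(-(lam * (w u t)^p) + (π/2)^2 * w u t)| ≤ π^2/4*(p-1) + (lam - π^2/4) := by
    intro t ht
    have hwx := w_pos hu ht
    have hw1 := w_le_one hu (Ioo_subset_Icc_self ht)
    obtain ⟨hq1, hq2⟩ := rpow_close hp hwx.le hw1
    exact G_bound hp hll hq1 hq2 (Real.rpow_nonneg hwx.le p) hw1
  have hDw0 : deriv (w u) 0 = 0 := by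
    have h := deriv_even hwdiff (w_even hu) 0
    simp only [neg_zero] at h
    linarith
  have hd0 : w u 0 - Real.cos (π*0/2) = 0 := by
    rw [w_zero hu]
    norm_num
  have hD0 : deriv (w u) 0 + Real.sin (π*0/2) * (π/2) = 0 := by
    rw [hDw0]
    norm_num
  have hdeven : ∀ t, w u (-t) - Real.cos (π*(-t)/2) = w u t - Real.cos (π*t/2) := by
    intro t
    rw [w_even hu, show π*(-t)/2 = -(π*t/2) from by ring, Real.cos_neg]
  have hDc : Continuous (fun s => deriv (w u) s + Real.sin (π*s/2) * (π/2)) := by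
    have hdc : Continuous (deriv (w u)) := (deriv_w_contDiff hu).continuous
    fun_prop
  have hmain := gronwall_aux hR0 hd' hD' hGb hd0 hD0 hdeven hDc
  intro t ht
  obtain ⟨h1, h2⟩ := hmain t ht
  constructor
  · have heq : u t / u 0 - Real.cos (π * t / 2) = w u t - Real.cos (π*t/2) := rfl
    rw [heq]
    calc |w u t - Real.cos (π*t/2)| ≤ _ := h1
    _ < ε := by linarith
  · have heq : deriv (fun s : ℝ => u s / u 0) t - (-(π / 2) * Real.sin (π * t / 2))
        = deriv (w u) t + Real.sin (π*t/2) * (π/2) := by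
      have h3 : deriv (fun s : ℝ => u s / u 0) t = deriv (w u) t := rfl
      rw [h3]
      ring
    rw [heq]
    calc |deriv (w u) t + Real.sin (π*t/2) * (π/2)| ≤ _ := h2
    _ < ε := by linarith

end LE1

/-- As `p → 1⁺`, `u_p / ‖u_p‖_∞ → cos(π t / 2)` in `C¹([-1,1])`. -/
theorem normalized_convergence_to_first_eigenfunction
    (u : ℝ → ℝ → ℝ) (hu : ∀ p : ℝ, 1 < p → IsLaneEmden p (u p)) :
    ∀ ε > (0 : ℝ), ∃ δ > (0 : ℝ), ∀ p : ℝ, 1 < p → p < 1 + δ →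
      ∀ t ∈ Icc (-1 : ℝ) 1,
        |u p t / u p 0 - Real.cos (π * t / 2)| < ε ∧
        |deriv (fun s : ℝ => u p s / u p 0) t - (-(π / 2) * Real.sin (π * t / 2))| < ε := by
  intro ε hε
  have hπ := Real.pi_pos
  have hcont : Tendsto (fun η : ℝ => π^2/4/(1-η)^2) (𝓝 0) (𝓝 (π^2/4)) := by
    have h : ContinuousAt (fun η : ℝ => π^2/4/(1-η)^2) 0 := by
      apply ContinuousAt.div continuousAt_const (by fun_prop)
      norm_num
    simpa using h.tendsto
  have h1 : ∀ᶠ η in 𝓝 (0:ℝ), π^2/4/(1-η)^2 < π^2/4 + ε/8 :=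
    hcont.eventually_lt_const (by linarith)
  have h2 : ∀ᶠ η in 𝓝 (0:ℝ), η < 1 := eventually_lt_nhds (by norm_num)
  have h4 : ∀ᶠ η in 𝓝[>] (0:ℝ), ((π^2/4/(1-η)^2 < π^2/4 + ε/8) ∧ η < 1) ∧ 0 < η :=
    ((h1.and h2).filter_mono nhdsWithin_le_nhds).and
      (eventually_mem_nhdsWithin.mono fun x hx => hx)
  obtain ⟨η, ⟨hηb, hη1⟩, hη0'⟩ := h4.exists
  have htp : Tendsto (fun q : ℝ => π^2/4 * (q-1) + (π^2/4/(1-η)^2 * η^(1-q) - π^2/4))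
      (𝓝[>] 1) (𝓝 (π^2/4/(1-η)^2 - π^2/4)) := by
    have hc1 : ContinuousAt (fun q : ℝ => π^2/4 * (q-1) + (π^2/4/(1-η)^2 * η^(1-q) - π^2/4)) 1 := by
      have hrp : ContinuousAt (fun q : ℝ => η^(1-q)) 1 :=
        (Real.continuousAt_const_rpow hη0'.ne').comp (by fun_prop)
      fun_prop
    have := hc1.tendsto.mono_left (nhdsWithin_le_nhds (s := Ioi (1:ℝ)))
    simpa [Real.rpow_natCast] using this
  have h3 : ∀ᶠ q in 𝓝[>] (1:ℝ),
      π^2/4 * (q-1) + (π^2/4/(1-η)^2 * η^(1-q) - π^2/4) < ε/2 :=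
    htp.eventually_lt_const (by linarith)
  obtain ⟨b, hb1, hb⟩ := mem_nhdsGT_iff_exists_Ioc_subset.mp h3
  have hb1' : (1:ℝ) < b := hb1
  refine ⟨b - 1, by linarith, ?_⟩
  intro q hq1 hq2
  have hB : π^2/4 * (q-1) + (π^2/4/(1-η)^2 * η^(1-q) - π^2/4) < ε/2 :=
    hb ⟨hq1, by linarith⟩
  have hup := LE1.lam_upper hq1 (hu q hq1) hη0' hη1
  have hηp : (0:ℝ) < η^(q-1) := Real.rpow_pos_of_pos hη0' _
  have hinv : η^(1-q) = (η^(q-1))⁻¹ := by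
    rw [← Real.rpow_neg hη0'.le]; ring_nf
  have hμsq : (π/(2*(1-η)))^2 = π^2/4/(1-η)^2 := by
    have h1η : (1:ℝ)-η ≠ 0 := by linarith
    field_simp
    ring
  have hlamle : (u q 0)^(q-1) ≤ π^2/4/(1-η)^2 * η^(1-q) := by
    rw [hinv, ← hμsq, ← div_eq_mul_inv]
    exact (le_div_iff₀ hηp).mpr hup
  exact LE1.key hq1 (hu q hq1) hε (by linarith)
end
end

section
/- As p → 1⁺, the functions p·u_p^{p-1} converge to the constant π²/4 uniformly on every compact subset of (-1,1): for every η ∈ (0,1), sup_{t ∈ [-η,η]} | p·u_p^{p-1}(t) - π²/4 | → 0 as p → 1⁺. -/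
open Real Set Filter Topology

noncomputable section

namespace LaneEmdenAux

lemma hasDerivAt_cos_mul (k t : ℝ) :
    HasDerivAt (fun s => Real.cos (k*s)) (-(k * Real.sin (k*t))) t := by
  have := (Real.hasDerivAt_cos (k*t)).comp t ((hasDerivAt_id t).const_mul k)
  simpa [mul_comm, Function.comp_def] using this

lemma hasDerivAt_sin_mul (k t : ℝ) :
    HasDerivAt (fun s => k * Real.sin (k*s)) (k^2 * Real.cos (k*t)) t := by
  have := ((Real.hasDerivAt_sin (k*t)).comp t ((hasDerivAt_id t).const_mul k)).const_mul k
  simpa [mul_comm, pow_two, mul_assoc] using this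

variable {p : ℝ} {u : ℝ → ℝ}

lemma deriv_contDiff (hC : ContDiff ℝ 2 u) : ContDiff ℝ 1 (deriv u) := by
  have h' : ContDiff ℝ ((1:ℕ) + 1) u := by exact_mod_cast hC
  exact_mod_cast (contDiff_succ_iff_deriv.mp h').2.2

/-- The Wronskian `W = u' ψ - u ψ'` with `ψ = cos (k ·)` and its derivative. -/
lemma W_hasDerivAt (hC : ContDiff ℝ 2 u) (k t : ℝ) :
    HasDerivAt (fun s => deriv u s * Real.cos (k*s) + u s * (k * Real.sin (k*s)))
      (deriv (deriv u) t * Real.cos (k*t) + k^2 * (u t * Real.cos (k*t))) t := by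
  have h1 : HasDerivAt (deriv u) (deriv (deriv u) t) t :=
    (((deriv_contDiff hC).differentiable one_ne_zero) t).hasDerivAt
  have h0 : HasDerivAt u (deriv u t) t :=
    ((hC.differentiable (by norm_num)) t).hasDerivAt
  have hA := h1.mul (hasDerivAt_cos_mul k t)
  have hB := h0.mul (hasDerivAt_sin_mul k t)
  exact (hA.add hB).congr_deriv (by ring)

lemma W_continuous (hC : ContDiff ℝ 2 u) (k : ℝ) :
    Continuous (fun s => deriv u s * Real.cos (k*s) + u s * (k * Real.sin (k*s))) := by
  have hc1 : Continuous (deriv u) := (deriv_contDiff hC).continuous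
  exact (hc1.mul (Real.continuous_cos.comp (continuous_const.mul continuous_id))).add
    (hC.continuous.mul (continuous_const.mul
      (Real.continuous_sin.comp (continuous_const.mul continuous_id))))

/-- Concavity bound: `u t ≥ (1-|t|) u 0` on `[-1,1]`. -/
lemma concave_bound (hp : 1 < p) (h : IsLaneEmden p u) :
    ∀ t ∈ Icc (-1:ℝ) 1, (1 - |t|) * u 0 ≤ u t := by
  obtain ⟨hC, hode, hm1, h1, hpos, heven, -, -⟩ := h
  have hconc : ConcaveOn ℝ (Icc (-1:ℝ) 1) u := by
    refine (strictConcaveOn_of_deriv2_neg (convex_Icc _ _) hC.continuous.continuousOn ?_).concaveOn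
    intro x hx
    rw [interior_Icc] at hx
    have := hode x hx
    have hux := hpos x hx
    rw [show deriv^[2] u x = deriv (deriv u) x from rfl, this]
    have : (0:ℝ) < u x ^ p := Real.rpow_pos_of_pos hux p
    linarith
  have base : ∀ t ∈ Icc (0:ℝ) 1, (1 - t) * u 0 ≤ u t := by
    intro t ht
    have h0m : (0:ℝ) ∈ Icc (-1:ℝ) 1 := by norm_num
    have h1m : (1:ℝ) ∈ Icc (-1:ℝ) 1 := by norm_num
    have := hconc.2 h0m h1m (by linarith [ht.2] : (0:ℝ) ≤ 1 - t) ht.1 (by ring)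
    simpa [h1, smul_eq_mul] using this
  intro t ht
  rcases le_total 0 t with h0 | h0
  · have := base t ⟨h0, ht.2⟩
    rwa [abs_of_nonneg h0]
  · have hmem : -t ∈ Icc (0:ℝ) 1 := ⟨by linarith, by linarith [ht.1]⟩
    have := base (-t) hmem
    rw [abs_of_nonpos h0]
    rw [heven t] at this
    simpa using this

/-- Sturm comparison (lower bound): `π²/4 ≤ u 0 ^ (p-1)`. -/
lemma lb (hp : 1 < p) (h : IsLaneEmden p u) : π^2/4 ≤ u 0 ^ (p-1) := by
  by_contra hlt
  push_neg at hlt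
  obtain ⟨hC, hode, hm1, h1, hpos, heven, -, hmax⟩ := h
  set k : ℝ := π/2 with hk
  set W : ℝ → ℝ := fun s => deriv u s * Real.cos (k*s) + u s * (k * Real.sin (k*s)) with hW
  have hsm : StrictMonoOn W (Icc (-1:ℝ) 1) := by
    refine strictMonoOn_of_deriv_pos (convex_Icc _ _) (W_continuous hC k).continuousOn ?_
    intro x hx
    rw [interior_Icc] at hx
    rw [(W_hasDerivAt hC k x).deriv, hode x hx]
    have hux : 0 < u x := hpos x hx
    have hcos : 0 < Real.cos (k*x) := by
      apply Real.cos_pos_of_mem_Ioo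
      constructor <;> · simp only [hk]; nlinarith [pi_pos, hx.1, hx.2]
    have hupow : u x ^ p = u x ^ (p-1) * u x := by
      have h := Real.rpow_add_one (ne_of_gt hux) (p-1)
      rwa [show p-1+1 = p by ring] at h
    have hle : u x ^ (p-1) ≤ u 0 ^ (p-1) :=
      Real.rpow_le_rpow (le_of_lt hux) (hmax x (Ioo_subset_Icc_self hx)) (by linarith)
    have hk2 : k^2 = π^2/4 := by rw [hk]; ring
    have h5 : u x ^ p < k^2 * u x := by
      rw [hupow, hk2]
      nlinarith [mul_le_mul_of_nonneg_right hle (le_of_lt hux)]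
    nlinarith [mul_pos hcos (by linarith : (0:ℝ) < k^2 * u x - u x ^ p)]
  have hend : W (-1) < W 1 := hsm (by norm_num) (by norm_num) (by norm_num)
  have e1 : W (-1) = 0 := by
    have : k * (-1) = -(π/2) := by rw [hk]; ring
    simp [hW, this, Real.cos_pi_div_two, hm1]
  have e2 : W 1 = 0 := by
    have : k * 1 = π/2 := by rw [hk]; ring
    simp [hW, this, Real.cos_pi_div_two, h1]
  rw [e1, e2] at hend
  exact lt_irrefl _ hend

/-- Sturm comparison (upper bound): `((1-a) u 0)^(p-1) < π²/(4a²)` for `a ∈ (0,1)`. -/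
lemma ub (hp : 1 < p) (h : IsLaneEmden p u) {a : ℝ} (ha0 : 0 < a) (ha1 : a < 1) :
    ((1-a) * u 0) ^ (p-1) < π^2/(4*a^2) := by
  by_contra hge
  push_neg at hge
  have hcb := concave_bound hp h
  obtain ⟨hC, hode, hm1, h1, hpos, heven, -, hmax⟩ := h
  set k : ℝ := π/(2*a) with hk
  have hk0 : 0 < k := by positivity
  have hk2 : k^2 = π^2/(4*a^2) := by rw [hk]; field_simp; ring
  set W : ℝ → ℝ := fun s => deriv u s * Real.cos (k*s) + u s * (k * Real.sin (k*s)) with hW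
  have ham : StrictAntiOn W (Icc (-a) a) ∨ True := Or.inr trivial
  have hanti : AntitoneOn W (Icc (-a) a) := by
    refine antitoneOn_of_deriv_nonpos (convex_Icc _ _) (W_continuous hC k).continuousOn
      (fun x hx => ((W_hasDerivAt hC k x).differentiableAt).differentiableWithinAt) ?_
    intro x hx
    rw [interior_Icc] at hx
    have hx' : x ∈ Ioo (-1:ℝ) 1 := ⟨by linarith [hx.1], by linarith [hx.2]⟩
    rw [(W_hasDerivAt hC k x).deriv, hode x hx']
    have hux : 0 < u x := hpos x hx'
    have hcos : 0 ≤ Real.cos (k*x) := by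
      apply le_of_lt
      apply Real.cos_pos_of_mem_Ioo
      have hπ := pi_pos
      constructor
      · rw [hk]; rw [div_mul_eq_mul_div, lt_div_iff₀ (by linarith)]
        nlinarith [hx.1]
      · rw [hk]; rw [div_mul_eq_mul_div, div_lt_iff₀ (by linarith)]
        nlinarith [hx.2]
    have hM0 : 0 < u 0 := hpos 0 (by norm_num)
    have hulow : (1-a) * u 0 ≤ u x := by
      have := hcb x (Ioo_subset_Icc_self hx')
      have habs : |x| ≤ a := abs_le.mpr ⟨le_of_lt hx.1, le_of_lt hx.2⟩
      nlinarith
    have hupow : u x ^ p = u x ^ (p-1) * u x := by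
      have h := Real.rpow_add_one (ne_of_gt hux) (p-1)
      rwa [show p-1+1 = p by ring] at h
    have hge' : k^2 ≤ u x ^ (p-1) := by
      rw [hk2]
      calc π^2/(4*a^2) ≤ ((1-a) * u 0) ^ (p-1) := hge
        _ ≤ u x ^ (p-1) :=
          Real.rpow_le_rpow (by nlinarith) hulow (by linarith)
    have h5 : k^2 * u x ≤ u x ^ p := by
      rw [hupow]
      nlinarith [mul_le_mul_of_nonneg_right hge' (le_of_lt hux)]
    nlinarith [mul_nonneg hcos (by linarith : (0:ℝ) ≤ u x ^ p - k^2 * u x)]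
  have haIoo : a ∈ Ioo (-1:ℝ) 1 := ⟨by linarith, ha1⟩
  have hua : 0 < u a := hpos a haIoo
  have hend : W a ≤ W (-a) :=
    hanti (by constructor <;> linarith) (by constructor <;> linarith) (by linarith)
  have hka : k * a = π/2 := by rw [hk]; field_simp
  have e1 : W a = u a * k := by
    simp [hW, hka, Real.cos_pi_div_two, Real.sin_pi_div_two]
  have e2 : W (-a) = -(u a * k) := by
    have hka' : k * (-a) = -(π/2) := by
      rw [hk]; field_simp
    have huaa : u (-a) = u a := heven a
    simp [hW, hka', Real.cos_pi_div_two, Real.sin_pi_div_two, huaa]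
  rw [e1, e2] at hend
  nlinarith

end LaneEmdenAux

set_option maxHeartbeats 1000000 in
/-- As `p → 1⁺`, `p u_p^(p-1) → π²/4` uniformly on compact subsets of `(-1,1)`. -/
theorem p_u_pow_tendsto_loc_uniform
    (u : ℝ → ℝ → ℝ) (hu : ∀ p : ℝ, 1 < p → IsLaneEmden p (u p)) :
    ∀ η : ℝ, 0 < η → η < 1 →
      ∀ ε > (0 : ℝ), ∃ δ > (0 : ℝ), ∀ p : ℝ, 1 < p → p < 1 + δ →
        ∀ t ∈ Icc (-η) η, |p * u p t ^ (p - 1) - π ^ 2 / 4| < ε := by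
  intro η hη0 hη1 ε hε
  have hπ := pi_pos
  -- choose a close to 1 so that π²/(4a²) = π²/4 + ε/2
  set a : ℝ := Real.sqrt (π^2/(π^2+2*ε)) with ha
  have harg0 : 0 < π^2/(π^2+2*ε) := by positivity
  have harg1 : π^2/(π^2+2*ε) < 1 := by
    rw [div_lt_one (by positivity)]; linarith
  have ha0 : 0 < a := Real.sqrt_pos.mpr harg0
  have ha1 : a < 1 := by
    rw [ha, show (1:ℝ) = Real.sqrt 1 by simp]
    exact Real.sqrt_lt_sqrt (le_of_lt harg0) harg1
  have ha2 : a^2 = π^2/(π^2+2*ε) := Real.sq_sqrt (le_of_lt harg0)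
  have haa : π^2/(4*a^2) = π^2/4 + ε/2 := by
    rw [ha2]; field_simp; ring
  -- tendsto lemmas
  have key : ∀ c : ℝ, 0 < c → Tendsto (fun p : ℝ => c ^ (p-1)) (𝓝 1) (𝓝 1) := by
    intro c hc
    have hcont : Continuous fun p : ℝ => c ^ (p-1) := by
      simp only [Real.rpow_def_of_pos hc]
      exact Real.continuous_exp.comp (continuous_const.mul (continuous_id.sub continuous_const))
    have := hcont.tendsto 1
    simpa using this
  have hL : Tendsto (fun p : ℝ => (π^2/4) * (1-η)^(p-1)) (𝓝 1) (𝓝 (π^2/4)) := by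
    have := (tendsto_const_nhds (x := π^2/4) (f := 𝓝 (1:ℝ))).mul (key (1-η) (by linarith))
    simpa using this
  have hU : Tendsto (fun p : ℝ => p * (π^2/4+ε/2) / (1-a)^(p-1)) (𝓝 1) (𝓝 (π^2/4+ε/2)) := by
    have h1 : Tendsto (fun p : ℝ => p * (π^2/4+ε/2)) (𝓝 1) (𝓝 (π^2/4+ε/2)) := by
      have := (tendsto_id (x := 𝓝 (1:ℝ))).mul (tendsto_const_nhds (x := π^2/4+ε/2))
      simpa using this
    have := h1.div (key (1-a) (by linarith)) one_ne_zero
    simpa [Pi.div_def] using this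
  have hev1 : ∀ᶠ q in 𝓝 (1:ℝ), π^2/4 - ε < (π^2/4) * (1-η)^(q-1) :=
    hL.eventually (eventually_gt_nhds (by linarith))
  have hev2 : ∀ᶠ q in 𝓝 (1:ℝ), q * (π^2/4+ε/2) / (1-a)^(q-1) < π^2/4 + ε :=
    hU.eventually (eventually_lt_nhds (by linarith))
  obtain ⟨δ, hδ0, hδ⟩ := Metric.eventually_nhds_iff.mp (hev1.and hev2)
  refine ⟨δ, hδ0, ?_⟩
  intro p hp1 hp2 t ht
  have hdist : dist p 1 < δ := by
    rw [Real.dist_eq, abs_of_nonneg (by linarith)]; linarith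
  obtain ⟨hb1, hb2⟩ := hδ hdist
  have h := hu p hp1
  have hMlb : π^2/4 ≤ u p 0 ^ (p-1) := LaneEmdenAux.lb hp1 h
  have hMub : ((1-a) * u p 0) ^ (p-1) < π^2/4 + ε/2 := by
    rw [← haa]; exact LaneEmdenAux.ub hp1 h ha0 ha1
  have hcb := LaneEmdenAux.concave_bound hp1 h
  obtain ⟨hC, hode, hm1, h1, hpos, heven, -, hmax⟩ := h
  have hM0 : 0 < u p 0 := hpos 0 (by norm_num)
  have htIoo : t ∈ Ioo (-1:ℝ) 1 := ⟨by linarith [ht.1], by linarith [ht.2]⟩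
  have hut0 : 0 < u p t := hpos t htIoo
  have habs : |t| ≤ η := abs_le.mpr ⟨ht.1, ht.2⟩
  have hutlow : (1-η) * u p 0 ≤ u p t := by
    have := hcb t (Ioo_subset_Icc_self htIoo)
    nlinarith
  have hutle : u p t ≤ u p 0 := hmax t (Ioo_subset_Icc_self htIoo)
  -- lower bound chain
  have hlow : (π^2/4) * (1-η)^(p-1) ≤ p * u p t ^ (p-1) := by
    have e1 : ((1-η) * u p 0) ^ (p-1) = (1-η)^(p-1) * u p 0 ^ (p-1) :=
      Real.mul_rpow (by linarith) (le_of_lt hM0)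
    have e2 : ((1-η) * u p 0) ^ (p-1) ≤ u p t ^ (p-1) :=
      Real.rpow_le_rpow (mul_nonneg (by linarith) (le_of_lt hM0)) hutlow (by linarith)
    have e3 : (0:ℝ) ≤ (1-η)^(p-1) := Real.rpow_nonneg (by linarith) _
    have e4 : (π^2/4) * (1-η)^(p-1) ≤ (1-η)^(p-1) * u p 0 ^ (p-1) := by
      rw [mul_comm]; exact mul_le_mul_of_nonneg_left hMlb e3
    have e5 : u p t ^ (p-1) ≤ p * u p t ^ (p-1) :=
      le_mul_of_one_le_left (Real.rpow_nonneg (le_of_lt hut0) (p-1)) (le_of_lt hp1)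
    linarith
  -- upper bound chain
  have hup : p * u p t ^ (p-1) < π^2/4 + ε := by
    have e1 : ((1-a) * u p 0) ^ (p-1) = (1-a)^(p-1) * u p 0 ^ (p-1) :=
      Real.mul_rpow (by linarith) (le_of_lt hM0)
    have e3 : (0:ℝ) < (1-a)^(p-1) := Real.rpow_pos_of_pos (by linarith) _
    have e2 : u p t ^ (p-1) ≤ u p 0 ^ (p-1) :=
      Real.rpow_le_rpow (le_of_lt hut0) hutle (by linarith)
    -- from hb2 : p*(π²/4+ε/2)/(1-a)^(p-1) < π²/4+ε
    have hb2' : p * (π^2/4+ε/2) < (π^2/4 + ε) * (1-a)^(p-1) := by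
      rw [div_lt_iff₀ e3] at hb2; linarith
    -- from hMub and e1: (1-a)^(p-1) * u p 0^(p-1) < π²/4+ε/2
    have hM' : (1-a)^(p-1) * u p 0 ^ (p-1) < π^2/4 + ε/2 := by
      rw [← e1]; exact hMub
    have : p * ((1-a)^(p-1) * u p 0 ^ (p-1)) < (π^2/4 + ε) * (1-a)^(p-1) := by
      calc p * ((1-a)^(p-1) * u p 0 ^ (p-1)) < p * (π^2/4+ε/2) := by
            apply mul_lt_mul_of_pos_left hM' (by linarith)
        _ < (π^2/4 + ε) * (1-a)^(p-1) := hb2'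
    have hfin : p * u p 0 ^ (p-1) < π^2/4 + ε := by
      have h6 : p * u p 0 ^ (p-1) * (1-a)^(p-1) < (π^2/4+ε) * (1-a)^(p-1) := by
        calc p * u p 0 ^ (p-1) * (1-a)^(p-1) = p * ((1-a)^(p-1) * u p 0 ^ (p-1)) := by ring
          _ < (π^2/4 + ε) * (1-a)^(p-1) := this
      exact lt_of_mul_lt_mul_right h6 e3.le
    calc p * u p t ^ (p-1) ≤ p * u p 0 ^ (p-1) := by
          apply mul_le_mul_of_nonneg_left e2 (by linarith)
      _ < π^2/4 + ε := hfin
  rw [abs_lt]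
  constructor <;> nlinarith
end
end

section
/- As p → 1⁺ one has the first-order expansion ‖u_p‖_∞^{p-1} = π²/4 + (π²/4)·c̃·(p-1) + o(p-1), i.e. lim_{p→1⁺} ( ‖u_p‖_∞^{p-1} - π²/4 ) / ( (π²/4)(p-1) ) = c̃, where c̃ := ( ∫_{-1}^{1} cos²(πt/2)·|log(cos(πt/2))| dt ) / ( ∫_{-1}^{1} cos²(πt/2) dt ), and c̃ > 0. -/
open Real Set Filter Topology

noncomputable section

/-- The constant `c̃` in the expansion of `‖u_p‖_∞^(p-1)` as `p → 1⁺`. -/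
def ctilde : ℝ :=
  (∫ t in (-1 : ℝ)..1, Real.cos (π * t / 2) ^ 2 * |Real.log (Real.cos (π * t / 2))|) /
  (∫ t in (-1 : ℝ)..1, Real.cos (π * t / 2) ^ 2)

namespace LE1
open MeasureTheory intervalIntegral

lemma sin_pos_of_mem {x : ℝ} (hx : x ∈ Ioc 0 (π/2)) : 0 < Real.sin x :=
  Real.sin_pos_of_pos_of_lt_pi hx.1 (lt_of_le_of_lt hx.2 (by linarith [pi_pos]))

lemma meas_sin_rpow (ε : ℝ) :
    AEStronglyMeasurable (fun x : ℝ => Real.sin x ^ ε)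
      (volume.restrict (Set.uIoc (0:ℝ) (π/2))) :=
  (Real.continuous_sin.measurable.pow_const ε).aestronglyMeasurable

lemma intInt_sin_rpow {ε : ℝ} (hε : -1 < ε) (hε0 : ε ≤ 0) :
    IntervalIntegrable (fun x => Real.sin x ^ ε) volume 0 (π/2) := by
  have hg : IntervalIntegrable (fun x : ℝ => (2/π)^ε * x ^ ε) volume 0 (π/2) :=
    (intervalIntegral.intervalIntegrable_rpow' hε).const_mul _
  refine hg.mono_fun (meas_sin_rpow ε) ?_
  filter_upwards [ae_restrict_mem measurableSet_uIoc] with x hx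
  rw [uIoc_of_le (by positivity)] at hx
  have hs : 0 < Real.sin x := sin_pos_of_mem hx
  have hx0 : 0 < x := hx.1
  have h1 : 2/π * x ≤ Real.sin x := Real.mul_le_sin hx0.le hx.2
  have h2 : Real.sin x ^ ε ≤ (2/π * x) ^ ε :=
    Real.rpow_le_rpow_of_nonpos (by positivity) h1 hε0
  simp only [Real.norm_eq_abs]
  rw [Real.abs_rpow_of_nonneg hs.le, abs_of_nonneg hs.le]
  have : (2/π * x) ^ ε = (2/π)^ε * x ^ ε := Real.mul_rpow (by positivity) hx0.le
  calc Real.sin x ^ ε ≤ (2/π * x)^ε := h2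
    _ ≤ |(2/π)^ε * x ^ ε| := by rw [this]; exact le_abs_self _

lemma abs_log_sin_le {x : ℝ} (hx : x ∈ Ioc 0 (π/2)) :
    |Real.log (Real.sin x)| ≤ 4 * Real.sin x ^ (-(1/4) : ℝ) := by
  have hs : 0 < Real.sin x := sin_pos_of_mem hx
  have hls : Real.log (Real.sin x) ≤ 0 := Real.log_nonpos hs.le (Real.sin_le_one x)
  rw [abs_of_nonpos hls]
  have h := Real.log_le_rpow_div (x := (Real.sin x)⁻¹) (by positivity)
    (show (0:ℝ) < 1/4 by norm_num)
  rw [Real.log_inv] at h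
  calc -Real.log (Real.sin x) ≤ ((Real.sin x)⁻¹) ^ ((1:ℝ)/4) / (1/4) := h
    _ = 4 * Real.sin x ^ (-(1/4):ℝ) := by
        rw [Real.inv_rpow hs.le, ← Real.rpow_neg hs.le]; ring

lemma intInt_log_sin : IntervalIntegrable (fun x => Real.log (Real.sin x)) volume 0 (π/2) := by
  have hg : IntervalIntegrable (fun x : ℝ => 4 * Real.sin x ^ (-(1/4):ℝ)) volume 0 (π/2) :=
    (intInt_sin_rpow (by norm_num) (by norm_num)).const_mul 4
  refine hg.mono_fun ((Real.measurable_log.comp Real.continuous_sin.measurable).aestronglyMeasurable) ?_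
  filter_upwards [ae_restrict_mem measurableSet_uIoc] with x hx
  rw [uIoc_of_le (by positivity)] at hx
  have hs : 0 < Real.sin x := sin_pos_of_mem hx
  rw [Real.norm_eq_abs, Real.norm_eq_abs]
  exact (abs_log_sin_le hx).trans (le_abs_self _)

lemma intInt_dom : IntervalIntegrable
    (fun x => |Real.log (Real.sin x)| * Real.sin x ^ (-(1/2):ℝ)) volume 0 (π/2) := by
  have hg : IntervalIntegrable (fun x : ℝ => 4 * Real.sin x ^ (-(3/4):ℝ)) volume 0 (π/2) :=
    (intInt_sin_rpow (by norm_num) (by norm_num)).const_mul 4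
  refine hg.mono_fun ?_ ?_
  · exact (((Real.measurable_log.comp Real.continuous_sin.measurable).abs).mul
      (Real.continuous_sin.measurable.pow_const _)).aestronglyMeasurable
  filter_upwards [ae_restrict_mem measurableSet_uIoc] with x hx
  rw [uIoc_of_le (by positivity)] at hx
  have hs : 0 < Real.sin x := sin_pos_of_mem hx
  simp only [Real.norm_eq_abs]
  have h1 : |Real.log (Real.sin x)| * Real.sin x ^ (-(1/2):ℝ)
      ≤ (4 * Real.sin x ^ (-(1/4):ℝ)) * Real.sin x ^ (-(1/2):ℝ) :=
    mul_le_mul_of_nonneg_right (abs_log_sin_le hx) (Real.rpow_nonneg hs.le _)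
  have h2 : (4 * Real.sin x ^ (-(1/4):ℝ)) * Real.sin x ^ (-(1/2):ℝ)
      = 4 * Real.sin x ^ (-(3/4):ℝ) := by
    rw [mul_assoc, ← Real.rpow_add hs]; norm_num
  calc |(|Real.log (Real.sin x)| * Real.sin x ^ (-(1/2):ℝ))|
      = |Real.log (Real.sin x)| * Real.sin x ^ (-(1/2):ℝ) := by
        rw [abs_of_nonneg (by positivity)]
    _ ≤ 4 * Real.sin x ^ (-(3/4):ℝ) := h1.trans_eq h2
    _ ≤ |4 * Real.sin x ^ (-(3/4):ℝ)| := le_abs_self _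

lemma intInt_log_cos : IntervalIntegrable (fun x => Real.log (Real.cos x)) volume 0 (π/2) := by
  have h := (intInt_log_sin.comp_sub_left (π/2)).symm
  simp only [sub_zero, sub_self] at h
  have : (fun x => Real.log (Real.sin (π/2 - x))) = fun x => Real.log (Real.cos x) := by
    funext x; rw [Real.sin_pi_div_two_sub]
  rwa [this] at h

lemma ae_ne_real (c : ℝ) : ∀ᵐ x : ℝ ∂volume, x ≠ c := by
  rw [ae_iff]
  simpa using measure_singleton c

lemma integral_log_sin : ∫ x in (0:ℝ)..(π/2), Real.log (Real.sin x) = -(π/2) * Real.log 2 := by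
  set I := ∫ x in (0:ℝ)..(π/2), Real.log (Real.sin x) with hI
  have hcos : ∫ x in (0:ℝ)..(π/2), Real.log (Real.cos x) = I := by
    have h := intervalIntegral.integral_comp_sub_left
      (a := (0:ℝ)) (b := π/2) (fun x => Real.log (Real.sin x)) (π/2)
    simp only [sub_zero, sub_self, Real.sin_pi_div_two_sub] at h
    rw [hI]; exact h
  have hint2 : IntervalIntegrable (fun x => Real.log (Real.sin x)) volume (π/2) π := by
    have h := (intInt_log_sin.comp_sub_left π).symm
    have e : (fun x => Real.log (Real.sin (π - x))) = fun x => Real.log (Real.sin x) := by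
      funext x; rw [Real.sin_pi_sub]
    rw [e] at h
    simp only [sub_zero] at h
    rwa [show π - π/2 = π/2 by ring] at h
  have hrefl : ∫ x in (π/2:ℝ)..π, Real.log (Real.sin x) = I := by
    have h := intervalIntegral.integral_comp_sub_left
      (a := (0:ℝ)) (b := π/2) (fun x => Real.log (Real.sin x)) π
    simp only [sub_zero, sub_self, Real.sin_pi_sub] at h
    rw [show π - π/2 = π/2 by ring] at h
    rw [hI]; exact h.symm
  have hfull : ∫ x in (0:ℝ)..π, Real.log (Real.sin x) = 2 * I := by
    rw [← intervalIntegral.integral_add_adjacent_intervals intInt_log_sin hint2, hrefl]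
    ring
  have hdouble : ∫ x in (0:ℝ)..(π/2), Real.log (Real.sin (2*x)) = I := by
    have h := intervalIntegral.integral_comp_mul_left
      (a := (0:ℝ)) (b := π/2) (fun x => Real.log (Real.sin x)) (c := 2) two_ne_zero
    simp only [mul_zero] at h
    rw [h, show (2:ℝ) * (π/2) = π by ring, hfull, smul_eq_mul]
    ring
  have heq : ∫ x in (0:ℝ)..(π/2), Real.log (Real.sin (2*x))
      = ∫ x in (0:ℝ)..(π/2), (Real.log 2 + Real.log (Real.sin x) + Real.log (Real.cos x)) := by
    refine intervalIntegral.integral_congr_ae ?_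
    filter_upwards [ae_ne_real (π/2)] with x hne hx
    rw [uIoc_of_le (by positivity)] at hx
    have hx2 : x < π/2 := lt_of_le_of_ne hx.2 hne
    have hs : 0 < Real.sin x := sin_pos_of_mem ⟨hx.1, hx.2⟩
    have hx1 := hx.1
    have hc : 0 < Real.cos x := Real.cos_pos_of_mem_Ioo ⟨by linarith [pi_pos, hx1], hx2⟩
    rw [Real.sin_two_mul, Real.log_mul (mul_ne_zero two_ne_zero hs.ne') hc.ne',
      Real.log_mul two_ne_zero hs.ne']
  have hsplit : ∫ x in (0:ℝ)..(π/2), (Real.log 2 + Real.log (Real.sin x) + Real.log (Real.cos x))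
      = (π/2) * Real.log 2 + I + I := by
    rw [intervalIntegral.integral_add (intervalIntegrable_const.add intInt_log_sin) intInt_log_cos,
      intervalIntegral.integral_add intervalIntegrable_const intInt_log_sin]
    simp only [intervalIntegral.integral_const, smul_eq_mul, sub_zero, hcos, ← hI]
  have : I = (π/2) * Real.log 2 + I + I := by rw [← hsplit, ← heq, hdouble]
  linarith

lemma integral_log_cos : ∫ x in (0:ℝ)..(π/2), Real.log (Real.cos x) = -(π/2) * Real.log 2 := by
  have h := intervalIntegral.integral_comp_sub_left
    (a := (0:ℝ)) (b := π/2) (fun x => Real.log (Real.sin x)) (π/2)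
  simp only [sub_zero, sub_self, Real.sin_pi_div_two_sub] at h
  rw [h, integral_log_sin]

lemma intInt_cos2_logcos :
    IntervalIntegrable (fun x => Real.cos (2*x) * Real.log (Real.cos x)) volume 0 (π/2) := by
  refine intInt_log_cos.abs.mono_fun ?_ ?_
  · exact ((Real.continuous_cos.comp (continuous_const.mul continuous_id)).measurable.mul
      (Real.measurable_log.comp Real.continuous_cos.measurable)).aestronglyMeasurable
  filter_upwards with x
  simp only [Real.norm_eq_abs, abs_abs, abs_mul]
  have := Real.abs_cos_le_one (2*x)
  nlinarith [abs_nonneg (Real.log (Real.cos x)), abs_nonneg (Real.cos (2*x))]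

lemma integral_cos2_logcos :
    ∫ x in (0:ℝ)..(π/2), Real.cos (2*x) * Real.log (Real.cos x) = π/4 := by
  set f := fun x => Real.cos (2*x) * Real.log (Real.cos x)
  set H : ℝ → ℝ := fun x => Real.sin x * (Real.cos x * Real.log (Real.cos x)) + x/2
    - Real.sin (2*x)/4 with hH
  -- derivative of H on [0, π/2)
  have hderiv : ∀ x ∈ Ico (0:ℝ) (π/2), HasDerivAt H (f x) x := by
    intro x hx
    have hc : 0 < Real.cos x := Real.cos_pos_of_mem_Ioo ⟨by linarith [pi_pos, hx.1], hx.2⟩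
    have h1 : HasDerivAt (fun x => Real.log (Real.cos x)) (-Real.sin x / Real.cos x) x :=
      (Real.hasDerivAt_cos x).log hc.ne'
    have h2 : HasDerivAt (fun x => Real.cos x * Real.log (Real.cos x))
        (-Real.sin x * Real.log (Real.cos x) + Real.cos x * (-Real.sin x / Real.cos x)) x :=
      (Real.hasDerivAt_cos x).mul h1
    have h3 : HasDerivAt (fun x => Real.sin x * (Real.cos x * Real.log (Real.cos x)))
        (Real.cos x * (Real.cos x * Real.log (Real.cos x)) + Real.sin x *
          (-Real.sin x * Real.log (Real.cos x) + Real.cos x * (-Real.sin x / Real.cos x))) x :=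
      (Real.hasDerivAt_sin x).mul h2
    have h4 : HasDerivAt (fun x : ℝ => x/2) (1/2) x := (hasDerivAt_id x).div_const 2
    have h5 : HasDerivAt (fun x : ℝ => Real.sin (2*x)/4) (Real.cos (2*x) * 2 / 4) x := by
      have := (Real.hasDerivAt_sin (2*x)).comp x ((hasDerivAt_id x).const_mul 2)
      simpa using this.div_const 4
    have := (h3.add h4).sub h5
    refine this.congr_deriv (Eq.symm ?_)
    have hs2 : Real.sin x ^ 2 = 1 - Real.cos x ^ 2 := Real.sin_sq x
    have hc2 : Real.cos (2*x) = 2 * Real.cos x ^ 2 - 1 := Real.cos_two_mul x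
    have e1 : Real.cos x * (-Real.sin x / Real.cos x) = -Real.sin x := by field_simp
    show Real.cos (2*x) * Real.log (Real.cos x) = _
    rw [e1, hc2]
    linear_combination (Real.log (Real.cos x) + 1) * hs2
  -- H is continuous, value π/4 at π/2
  have hmul : Continuous fun x : ℝ => Real.cos x * Real.log (Real.cos x) :=
    Real.continuous_mul_log.comp Real.continuous_cos
  have hHcont : Continuous H :=
    ((Real.continuous_sin.mul hmul).add (continuous_id.div_const 2)).sub
      ((Real.continuous_sin.comp (continuous_const.mul continuous_id)).div_const 4)
  have hH0 : H 0 = 0 := by simp [hH]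
  have hHval : H (π/2) = π/4 := by
    have : (2:ℝ) * (π/2) = π := by ring
    simp [hH, this, Real.cos_pi_div_two, Real.sin_pi_div_two, Real.sin_pi]
    ring
  have key : ∀ b ∈ Ico (0:ℝ) (π/2), ∫ x in (0:ℝ)..b, f x = H b := by
    intro b hb
    have hstep : ∫ x in (0:ℝ)..b, f x = H b - H 0 := by
      refine intervalIntegral.integral_eq_sub_of_hasDerivAt ?_ ?_
      · intro x hx
        rw [uIcc_of_le hb.1] at hx
        exact hderiv x ⟨hx.1, lt_of_le_of_lt hx.2 hb.2⟩
      · apply ContinuousOn.intervalIntegrable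
        rw [uIcc_of_le hb.1]
        intro x hx
        have hc : 0 < Real.cos x :=
          Real.cos_pos_of_mem_Ioo ⟨by linarith [pi_pos, hx.1], lt_of_le_of_lt hx.2 hb.2⟩
        exact ((Real.continuous_cos.comp
          (continuous_const.mul continuous_id)).continuousAt.mul
          ((Real.continuousAt_log hc.ne').comp Real.continuous_cos.continuousAt)).continuousWithinAt
    rw [hstep, hH0, sub_zero]
  have hIoo : 𝓝[Ioo (0:ℝ) (π/2)] (π/2) = 𝓝[<] (π/2) :=
    nhdsWithin_Ioo_eq_nhdsLT (by positivity)
  have hF : Tendsto (fun b => ∫ x in (0:ℝ)..b, f x) (𝓝[<] (π/2))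
      (𝓝 (∫ x in (0:ℝ)..(π/2), f x)) := by
    have hio : IntegrableOn f (uIcc 0 (π/2)) volume := by
      rw [uIcc_of_le (by positivity)]
      exact (intervalIntegrable_iff_integrableOn_Icc_of_le (by positivity)).1 intInt_cos2_logcos
    have hcont := intervalIntegral.continuousOn_primitive_interval hio
    have hmem : (π/2 : ℝ) ∈ uIcc (0:ℝ) (π/2) := right_mem_uIcc
    have := (hcont.continuousWithinAt hmem)
    rw [uIcc_of_le (by positivity : (0:ℝ) ≤ π/2)] at this
    refine this.tendsto.mono_left ?_
    rw [← hIoo]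
    exact nhdsWithin_mono _ Ioo_subset_Icc_self
  have hHlim : Tendsto H (𝓝[<] (π/2)) (𝓝 (π/4)) := by
    have := (hHcont.tendsto (π/2)).mono_left (nhdsWithin_le_nhds (s := Iio (π/2)))
    rwa [hHval] at this
  have hev : (fun b => ∫ x in (0:ℝ)..b, f x) =ᶠ[𝓝[<] (π/2)] H := by
    rw [← hIoo]
    filter_upwards [self_mem_nhdsWithin] with b hb
    exact key b ⟨hb.1.le, hb.2⟩
  exact tendsto_nhds_unique (hF.congr' hev) hHlim

def G : ℝ → ℝ := fun x => Real.cos x ^ 2 * |Real.log (Real.cos x)|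

lemma G_even : ∀ x, G (-x) = G x := by
  intro x; simp [G, Real.cos_neg]

lemma intInt_G : IntervalIntegrable G volume 0 (π/2) := by
  refine intInt_log_cos.abs.mono_fun ?_ ?_
  · exact ((Real.continuous_cos.measurable.pow_const 2).mul
      (Real.measurable_log.comp Real.continuous_cos.measurable).abs).aestronglyMeasurable
  filter_upwards with x
  simp only [G, Real.norm_eq_abs, abs_abs, abs_mul, abs_pow]
  have h1 : |Real.cos x| ^ 2 ≤ 1 :=
    pow_le_one₀ (abs_nonneg _) (Real.abs_cos_le_one x)
  exact mul_le_of_le_one_left (abs_nonneg _) h1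

lemma intInt_G_neg : IntervalIntegrable G volume (-(π/2)) 0 := by
  have h : IntervalIntegrable (fun x => G (-x)) volume (-(-(π/2))) (-0) := by
    have : (fun x => G (-x)) = G := funext G_even
    rw [this]
    simp only [neg_neg, neg_zero]
    exact intInt_G.symm
  exact (IntervalIntegrable.iff_comp_neg (a := -(π/2)) (b := 0) (f := G) enorm_ne_top).mpr h

lemma integral_G_symm : ∫ x in (-(π/2):ℝ)..0, G x = ∫ x in (0:ℝ)..(π/2), G x := by
  have h := intervalIntegral.integral_comp_neg (a := (0:ℝ)) (b := π/2) G
  have e : (fun x => G (-x)) = G := funext G_even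
  rw [e, neg_zero] at h
  exact h.symm

lemma integral_G : ∫ x in (0:ℝ)..(π/2), G x = π/4 * Real.log 2 - π/8 := by
  have h1 : ∫ x in (0:ℝ)..(π/2), G x
      = ∫ x in (0:ℝ)..(π/2), -((1/2) * Real.log (Real.cos x)
        + (1/2) * (Real.cos (2*x) * Real.log (Real.cos x))) := by
    refine intervalIntegral.integral_congr ?_
    intro x hx
    rw [uIcc_of_le (by positivity)] at hx
    have hc0 : 0 ≤ Real.cos x := Real.cos_nonneg_of_mem_Icc
      ⟨by linarith [pi_pos, hx.1], hx.2⟩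
    have hl : Real.log (Real.cos x) ≤ 0 := Real.log_nonpos hc0 (Real.cos_le_one x)
    simp only [G, abs_of_nonpos hl]
    rw [Real.cos_sq x]
    ring
  rw [h1, intervalIntegral.integral_neg, intervalIntegral.integral_add
    (intInt_log_cos.const_mul _) (intInt_cos2_logcos.const_mul _),
    intervalIntegral.integral_const_mul, intervalIntegral.integral_const_mul,
    integral_log_cos, integral_cos2_logcos]
  ring

lemma num_eq : ∫ t in (-1:ℝ)..1, Real.cos (π * t / 2) ^ 2 * |Real.log (Real.cos (π * t / 2))|
    = Real.log 2 - 1/2 := by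
  have e : ∀ t : ℝ, π * t / 2 = (π/2) * t := fun t => by ring
  simp_rw [e]
  have h := intervalIntegral.integral_comp_mul_left (a := (-1:ℝ)) (b := 1) G
    (c := π/2) (by positivity)
  simp only [G] at h
  rw [h, show (π/2) * (-1:ℝ) = -(π/2) by ring, mul_one,
    ← intervalIntegral.integral_add_adjacent_intervals (b := (0:ℝ))
      (by exact intInt_G_neg) (by exact intInt_G)]
  have h2 := integral_G_symm
  have h3 := integral_G
  simp only [G] at h2 h3
  rw [h2, h3, smul_eq_mul]
  have hπ : (π:ℝ) ≠ 0 := pi_ne_zero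
  field_simp
  ring

lemma den_eq : ∫ t in (-1:ℝ)..1, Real.cos (π * t / 2) ^ 2 = 1 := by
  have e : ∀ t : ℝ, π * t / 2 = (π/2) * t := fun t => by ring
  simp_rw [e]
  have h := intervalIntegral.integral_comp_mul_left (a := (-1:ℝ)) (b := 1)
    (fun x => Real.cos x ^ 2) (c := π/2) (by positivity)
  rw [h, show (π/2) * (-1:ℝ) = -(π/2) by ring, mul_one, integral_cos_sq]
  simp [Real.cos_pi_div_two, Real.sin_pi_div_two]

def A (ε : ℝ) : ℝ := ∫ x in (0:ℝ)..(π/2), Real.sin x ^ ε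

lemma A_zero : A 0 = π/2 := by
  simp only [A, Real.rpow_zero]
  simp

lemma slope_bound {y ε : ℝ} (hy : 0 < y) (hy1 : y ≤ 1) (hε : -(1/2) ≤ ε) (hε0 : ε < 0) :
    |(y ^ ε - 1)/ε| ≤ |Real.log y| * y ^ (-(1/2):ℝ) := by
  set L := Real.log y with hLdef
  have hL : L ≤ 0 := Real.log_nonpos hy.le hy1
  have hεL : 0 ≤ ε * L := by nlinarith
  have h0 : 0 ≤ Real.exp (ε*L) - 1 := by
    have := Real.one_le_exp hεL
    linarith
  have h1 : Real.exp (ε*L) - 1 ≤ ε*L*Real.exp (ε*L) := by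
    have h2 := Real.add_one_le_exp (-(ε*L))
    have h3 : Real.exp (-(ε*L)) = (Real.exp (ε*L))⁻¹ := Real.exp_neg _
    have hp := Real.exp_pos (ε*L)
    rw [h3] at h2
    have h4 := mul_le_mul_of_nonneg_right h2 hp.le
    rw [inv_mul_cancel₀ hp.ne'] at h4
    nlinarith
  have hrw : y ^ ε = Real.exp (ε * L) := by
    rw [Real.rpow_def_of_pos hy, hLdef]; ring_nf
  have hrw2 : y ^ (-(1/2):ℝ) = Real.exp ((-(1/2)) * L) := by
    rw [Real.rpow_def_of_pos hy, hLdef]; ring_nf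
  rw [hrw, hrw2, abs_div, abs_of_nonneg h0, abs_of_neg hε0]
  rw [div_le_iff₀ (by linarith : (0:ℝ) < -ε)]
  calc Real.exp (ε*L) - 1 ≤ ε*L*Real.exp (ε*L) := h1
    _ = (-ε) * (|L| * Real.exp (ε*L)) := by rw [abs_of_nonpos hL]; ring
    _ ≤ (-ε) * (|L| * Real.exp ((-(1/2))*L)) := by
        refine mul_le_mul_of_nonneg_left (mul_le_mul_of_nonneg_left
          (Real.exp_le_exp.2 ?_) (abs_nonneg _)) (by linarith)
        nlinarith
    _ = |L| * Real.exp ((-(1/2))*L) * (-ε) := by ring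

lemma A_slope_tendsto :
    Tendsto (fun ε => (A ε - A 0)/ε) (𝓝[<] (0:ℝ)) (𝓝 (-(π/2) * Real.log 2)) := by
  have hIoo : 𝓝[Ioo (-(1/2):ℝ) 0] 0 = 𝓝[<] (0:ℝ) :=
    nhdsWithin_Ioo_eq_nhdsLT (by norm_num)
  rw [← hIoo]
  have hmain : Tendsto (fun ε => ∫ x in (0:ℝ)..(π/2), (Real.sin x ^ ε - 1)/ε)
      (𝓝[Ioo (-(1/2):ℝ) 0] 0) (𝓝 (∫ x in (0:ℝ)..(π/2), Real.log (Real.sin x))) := by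
    apply intervalIntegral.tendsto_integral_filter_of_dominated_convergence
      (bound := fun x => |Real.log (Real.sin x)| * Real.sin x ^ (-(1/2):ℝ))
    · filter_upwards with ε
      exact (((Real.continuous_sin.measurable.pow_const ε).sub
        measurable_const).div_const ε).aestronglyMeasurable
    · filter_upwards [self_mem_nhdsWithin] with ε hε
      filter_upwards with x hx
      rw [uIoc_of_le (by positivity)] at hx
      have hs := sin_pos_of_mem hx
      rw [Real.norm_eq_abs]
      exact slope_bound hs (Real.sin_le_one x) hε.1.le hε.2
    · exact intInt_dom
    · filter_upwards with x hx
      rw [uIoc_of_le (by positivity)] at hx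
      have hs := sin_pos_of_mem hx
      have hd : HasDerivAt (fun ε : ℝ => Real.sin x ^ ε)
          (Real.sin x ^ (0:ℝ) * Real.log (Real.sin x)) 0 :=
        (Real.hasStrictDerivAt_const_rpow hs 0).hasDerivAt
      have hsl := hasDerivAt_iff_tendsto_slope.1 hd
      rw [Real.rpow_zero, one_mul] at hsl
      have hmono : 𝓝[Ioo (-(1/2):ℝ) 0] 0 ≤ 𝓝[≠] (0:ℝ) :=
        nhdsWithin_mono _ (fun y hy => ne_of_lt hy.2)
      have := hsl.mono_left hmono
      refine this.congr ?_
      intro ε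
      simp [slope_def_field, Real.rpow_zero]
  have hev : (fun ε => ∫ x in (0:ℝ)..(π/2), (Real.sin x ^ ε - 1)/ε)
      =ᶠ[𝓝[Ioo (-(1/2):ℝ) 0] 0] (fun ε => (A ε - A 0)/ε) := by
    filter_upwards [self_mem_nhdsWithin] with ε hε
    have hint : IntervalIntegrable (fun x => Real.sin x ^ ε) volume 0 (π/2) :=
      intInt_sin_rpow (by linarith [hε.1]) hε.2.le
    rw [A_zero]
    have : ∫ x in (0:ℝ)..(π/2), (Real.sin x ^ ε - 1)/ε
        = (∫ x in (0:ℝ)..(π/2), (Real.sin x ^ ε - 1))/ε := intervalIntegral.integral_div ε _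
    rw [this, intervalIntegral.integral_sub hint intervalIntegrable_const]
    simp [A]
  rw [show -(π/2) * Real.log 2 = ∫ x in (0:ℝ)..(π/2), Real.log (Real.sin x) from
    by rw [integral_log_sin]]
  exact hmain.congr' hev

lemma key_alg {p M w : ℝ} (hp : 1 < p) (hM : 0 < M) (hw0 : 0 < w) (hwM : w < M) :
    -(Real.sin (Real.arcsin ((w/M)^((p+1)/2))) ^ ((1-p)/(1+p))) *
      (1 / Real.sqrt (1 - ((w/M)^((p+1)/2))^(2:ℕ)) *
       (((p+1)/2) * (w/M)^((p+1)/2 - 1) *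
         (-(Real.sqrt ((2/(p+1)) * (M^(p+1) - w^(p+1)))) / M)))
    = Real.sqrt ((p+1)/2) * M^((p-1)/2) := by
  set r : ℝ := w / M with hrdef
  have hr0 : 0 < r := div_pos hw0 hM
  have hr1 : r < 1 := (div_lt_one hM).2 hwM
  have hv0 : 0 < r ^ ((p+1)/2) := Real.rpow_pos_of_pos hr0 _
  have hv1 : r ^ ((p+1)/2) < 1 :=
    Real.rpow_lt_one hr0.le hr1 (by linarith)
  -- sin (arcsin v) = v
  rw [Real.sin_arcsin (by linarith) hv1.le]
  -- v ^ ε = r ^ ((1-p)/2)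
  have hvε : (r ^ ((p+1)/2)) ^ ((1-p)/(1+p)) = r ^ ((1-p)/2) := by
    rw [← Real.rpow_mul hr0.le]
    congr 1
    field_simp
    ring
  -- v^2 = r^(p+1)
  have hv2 : (r ^ ((p+1)/2)) ^ (2:ℕ) = r ^ (p+1) := by
    rw [← Real.rpow_natCast (r ^ ((p+1)/2)) 2, ← Real.rpow_mul hr0.le]
    norm_num
  have hrp1 : r ^ (p+1) < 1 := Real.rpow_lt_one hr0.le hr1 (by linarith)
  have hrp0 : 0 < r ^ (p+1) := Real.rpow_pos_of_pos hr0 _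
  -- w^(p+1) = M^(p+1) * r^(p+1)
  have hw : w ^ (p+1) = M ^ (p+1) * r ^ (p+1) := by
    rw [hrdef, Real.div_rpow hw0.le hM.le]
    field_simp
  have hMp : 0 < M ^ (p+1) := Real.rpow_pos_of_pos hM _
  -- sqrt factorization
  have hsq : Real.sqrt ((2/(p+1)) * (M^(p+1) - w^(p+1)))
      = Real.sqrt (2/(p+1)) * M^((p+1)/2) * Real.sqrt (1 - r^(p+1)) := by
    rw [hw, show M ^ (p+1) - M ^ (p+1) * r ^ (p+1) = M^(p+1) * (1 - r^(p+1)) by ring,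
      ← mul_assoc, Real.sqrt_mul (by positivity), Real.sqrt_mul (by positivity)]
    congr 1
    rw [show ((p+1)/2 : ℝ) = (p+1) * (1/2) by ring, Real.rpow_mul hM.le,
      ← Real.sqrt_eq_rpow]
  rw [hvε, hv2, hsq]
  have h1r : 0 < 1 - r^(p+1) := by linarith
  have hs1 : 0 < Real.sqrt (1 - r^(p+1)) := Real.sqrt_pos.2 h1r
  -- r-powers combine to 1
  have hrcomb : r ^ ((1-p)/2) * r ^ ((p+1)/2 - 1) = 1 := by
    rw [← Real.rpow_add hr0, show ((1-p)/2 + ((p+1)/2 - 1) : ℝ) = 0 by ring, Real.rpow_zero]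
  -- (p+1)/2 * sqrt (2/(p+1)) = sqrt ((p+1)/2)
  have hc : ((p+1)/2) * Real.sqrt (2/(p+1)) = Real.sqrt ((p+1)/2) := by
    rw [show ((p+1)/2 : ℝ) * Real.sqrt (2/(p+1))
        = Real.sqrt (((p+1)/2)^(2:ℕ)) * Real.sqrt (2/(p+1)) by
          rw [Real.sqrt_sq (by positivity)],
      ← Real.sqrt_mul (by positivity)]
    congr 1
    field_simp
  -- M powers
  have hMc : M ^ ((p+1)/2) / M = M ^ ((p-1)/2) := by
    have h2 : M ^ ((p-1)/2 : ℝ) * M ^ (1:ℝ) = M ^ ((p+1)/2 : ℝ) := by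
      rw [← Real.rpow_add hM]; congr 1; ring
    rw [div_eq_iff hM.ne', ← h2, Real.rpow_one]
  calc -(r^((1-p)/2)) * (1 / Real.sqrt (1 - r^(p+1)) * (((p+1)/2) * r^((p+1)/2 - 1) *
        (-(Real.sqrt (2/(p+1)) * M^((p+1)/2) * Real.sqrt (1-r^(p+1))) / M)))
      = (r^((1-p)/2) * r^((p+1)/2 - 1)) * (((p+1)/2) * Real.sqrt (2/(p+1)))
        * (M^((p+1)/2)/M) * (Real.sqrt (1-r^(p+1)) / Real.sqrt (1-r^(p+1))) := by
        ring
    _ = Real.sqrt ((p+1)/2) * M^((p-1)/2) := by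
        rw [hrcomb, hc, hMc, div_self hs1.ne']
        ring

lemma lane_emden_key {p : ℝ} {u : ℝ → ℝ} (hp : 1 < p) (h : IsLaneEmden p u) :
    A ((1-p)/(1+p)) = Real.sqrt ((p+1)/2) * (u 0) ^ ((p-1)/2) := by
  obtain ⟨hC2, hODE, hm1, hu1, hpos, heven, hmono, hmax⟩ := h
  have hM : 0 < u 0 := hpos 0 (by constructor <;> norm_num)
  set M := u 0 with hMdef
  have hp1 : (0:ℝ) < p + 1 := by linarith
  -- smoothness
  have hu_diff : Differentiable ℝ u := hC2.differentiable (by norm_num)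
  have hC1' : ContDiff ℝ 1 (deriv u) := by
    have h2 : ContDiff ℝ ((1:ℕ) + 1) u := by exact_mod_cast hC2
    exact ((contDiff_succ_iff_deriv).1 h2).2.2
  have hu'_diff : Differentiable ℝ (deriv u) := hC1'.differentiable one_ne_zero
  have hu'_cont : Continuous (deriv u) := hu'_diff.continuous
  have hu'0 : deriv u 0 = 0 := by
    have he1 : (fun t => u (-t)) = u := funext heven
    have he2 : deriv (fun t => u (-t)) 0 = -deriv u (-0) := deriv_comp_neg u 0
    rw [he1, neg_zero] at he2
    linarith
  -- energy
  set E : ℝ → ℝ := fun t => (deriv u t)^(2:ℕ) + (2/(p+1)) * (u t)^(p+1) with hEdef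
  have hE' : ∀ t ∈ Ioo (-1:ℝ) 1, HasDerivAt E 0 t := by
    intro t ht
    have hu_t : HasDerivAt u (deriv u t) t := (hu_diff t).hasDerivAt
    have hdd : HasDerivAt (deriv u) (-(u t ^ p)) t := by
      have h3 := (hu'_diff t).hasDerivAt
      rwa [hODE t ht] at h3
    have hd1 : HasDerivAt (fun t => (deriv u t)^(2:ℕ))
        ((2:ℕ) * (deriv u t)^(2-1) * (-(u t ^ p))) t := hdd.pow 2
    have hd2 : HasDerivAt (fun s => (u s)^(p+1)) (deriv u t * (p+1) * (u t)^(p+1-1)) t :=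
      hu_t.rpow_const (Or.inl (hpos t ht).ne')
    have hd3 := hd1.add (hd2.const_mul (2/(p+1)))
    refine hd3.congr_deriv (Eq.symm ?_)
    rw [show (p+1-1:ℝ) = p by ring]
    field_simp
    ring
  have hEconst : ∀ t ∈ Ioo (-1:ℝ) 1, E t = E 0 := by
    intro t ht
    have hb := Convex.norm_image_sub_le_of_norm_hasDerivWithin_le
      (f := E) (f' := fun _ => 0) (C := 0)
      (fun x hx => (hE' x hx).hasDerivWithinAt) (fun x _ => by simp)
      (convex_Ioo _ _) (by constructor <;> norm_num : (0:ℝ) ∈ Ioo (-1:ℝ) 1) ht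
    simp only [mul_comm, norm_zero, zero_mul] at hb
    have : ‖E t - E 0‖ ≤ 0 := by simpa using hb
    have := norm_le_zero_iff.1 this
    linarith [sub_eq_zero.1 this]
  have henergy : ∀ t ∈ Ioo (-1:ℝ) 1,
      (deriv u t)^(2:ℕ) = (2/(p+1)) * (M^(p+1) - (u t)^(p+1)) := by
    intro t ht
    have h4 := hEconst t ht
    simp only [hEdef, hu'0] at h4
    rw [mul_sub]
    nlinarith [h4]
  -- sign of deriv
  have hu'neg : ∀ t ∈ Ioo (0:ℝ) 1, deriv u t < 0 := by
    have hanti : StrictAntiOn (deriv u) (Icc (-1) 1) := by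
      apply strictAntiOn_of_deriv_neg (convex_Icc _ _) hu'_cont.continuousOn
      intro x hx
      rw [interior_Icc] at hx
      rw [hODE x hx]
      have := Real.rpow_pos_of_pos (hpos x hx) p
      linarith
    intro t ht
    have h5 := hanti (by constructor <;> norm_num : (0:ℝ) ∈ Icc (-1:ℝ) 1)
      ⟨by linarith [ht.1], ht.2.le⟩ ht.1
    rwa [hu'0] at h5
  have hult : ∀ t ∈ Ioo (0:ℝ) 1, u t < M := by
    have hanti : StrictAntiOn u (Icc 0 1) := by
      apply strictAntiOn_of_deriv_neg (convex_Icc _ _) hu_diff.continuous.continuousOn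
      intro x hx
      rw [interior_Icc] at hx
      exact hu'neg x hx
    intro t ht
    exact hanti (left_mem_Icc.2 zero_le_one) ⟨ht.1.le, ht.2.le⟩ ht.1
  have hunn : ∀ t ∈ Icc (0:ℝ) 1, 0 ≤ u t := by
    intro t ht
    have := hmono ht (right_mem_Icc.2 zero_le_one) ht.2
    rwa [hu1] at this
  -- deriv formula
  have hderiv_formula : ∀ t ∈ Ioo (0:ℝ) 1, deriv u t
      = -Real.sqrt ((2/(p+1)) * (M^(p+1) - (u t)^(p+1))) := by
    intro t ht
    have ht' : t ∈ Ioo (-1:ℝ) 1 := ⟨by linarith [ht.1], ht.2⟩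
    have he := henergy t ht'
    have hneg := hu'neg t ht
    have h6 : Real.sqrt ((2/(p+1)) * (M^(p+1) - (u t)^(p+1))) = -deriv u t := by
      rw [← he, Real.sqrt_sq_eq_abs, abs_of_neg hneg]
    linarith
  -- epsilon
  set ε : ℝ := (1-p)/(1+p) with hεdef
  have hε1 : -1 < ε := by
    rw [hεdef, lt_div_iff₀ (by linarith : (0:ℝ) < 1 + p)]
    linarith
  have hε0 : ε < 0 := div_neg_of_neg_of_pos (by linarith) (by linarith)
  have hint : IntervalIntegrable (fun x => Real.sin x ^ ε) volume 0 (π/2) :=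
    intInt_sin_rpow hε1 hε0.le
  -- phase function
  set v : ℝ → ℝ := fun t => (u t / M) ^ ((p+1)/2) with hvdef
  set φ : ℝ → ℝ := fun t => Real.arcsin (v t) with hφdef
  set W : ℝ → ℝ := fun t => ∫ x in (φ t)..(π/2), Real.sin x ^ ε with hWdef
  have hφ0 : φ 0 = π/2 := by
    simp only [hφdef, hvdef, ← hMdef]
    rw [div_self hM.ne', Real.one_rpow, Real.arcsin_one]
  have hφ1 : φ 1 = 0 := by
    simp only [hφdef, hvdef]
    rw [hu1, zero_div, Real.zero_rpow (by positivity), Real.arcsin_zero]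
  have hW0 : W 0 = 0 := by
    simp only [hWdef, hφ0, intervalIntegral.integral_same]
  have hW1 : W 1 = A ε := by
    simp only [hWdef, hφ1, A]
  -- continuity of W on [0,1]
  have hvcont : ContinuousOn v (Icc 0 1) :=
    (hu_diff.continuous.continuousOn.div_const M).rpow_const
      (fun x _ => Or.inr (by positivity))
  have hφcont : ContinuousOn φ (Icc 0 1) := Real.continuous_arcsin.comp_continuousOn hvcont
  have hφmaps : MapsTo φ (Icc 0 1) (Icc 0 (π/2)) := by
    intro t ht
    constructor
    · exact Real.arcsin_nonneg.2 (Real.rpow_nonneg (div_nonneg (hunn t ht) hM.le) _)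
    · exact Real.arcsin_le_pi_div_two _
  have hPcont : ContinuousOn (fun y => ∫ x in y..(π/2), Real.sin x ^ ε) (Icc 0 (π/2)) := by
    have hio : IntegrableOn (fun x => Real.sin x ^ ε) (uIcc 0 (π/2)) volume := by
      rw [uIcc_of_le (by positivity)]
      exact (intervalIntegrable_iff_integrableOn_Icc_of_le (by positivity)).1 hint
    have h7 := intervalIntegral.continuousOn_primitive_interval hio
    rw [uIcc_of_le (by positivity : (0:ℝ) ≤ π/2)] at h7
    refine (ContinuousOn.sub (continuousOn_const
      (c := ∫ x in (0:ℝ)..(π/2), Real.sin x ^ ε)) h7).congr ?_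
    intro y hy
    have hy2 : IntervalIntegrable (fun x => Real.sin x ^ ε) volume 0 y :=
      hint.mono_set (by
        rw [uIcc_of_le hy.1, uIcc_of_le (by positivity : (0:ℝ) ≤ π/2)]
        exact Icc_subset_Icc le_rfl hy.2)
    dsimp only
    rw [← intervalIntegral.integral_interval_sub_left hint hy2]
    rfl
  have hWcont : ContinuousOn W (Icc 0 1) := hPcont.comp hφcont hφmaps
  -- derivative of W
  set K : ℝ := Real.sqrt ((p+1)/2) * M^((p-1)/2) with hKdef
  have hWderiv : ∀ t ∈ Ioo (0:ℝ) 1, HasDerivAt W K t := by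
    intro t ht
    have htm : t ∈ Ioo (-1:ℝ) 1 := ⟨by linarith [ht.1], ht.2⟩
    have hut0 : 0 < u t := hpos t htm
    have hutM : u t < M := hult t ht
    have hr0 : 0 < u t / M := div_pos hut0 hM
    have hr1 : u t / M < 1 := (div_lt_one hM).2 hutM
    have hv0 : 0 < (u t / M) ^ ((p+1)/2) := Real.rpow_pos_of_pos hr0 _
    have hv1 : (u t / M) ^ ((p+1)/2) < 1 := Real.rpow_lt_one hr0.le hr1 (by positivity)
    have hφpos : 0 < Real.arcsin ((u t / M) ^ ((p+1)/2)) := Real.arcsin_pos.2 hv0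
    have hφlt : Real.arcsin ((u t / M) ^ ((p+1)/2)) < π/2 := Real.arcsin_lt_pi_div_two.2 hv1
    have hsφ : 0 < Real.sin (Real.arcsin ((u t / M) ^ ((p+1)/2))) :=
      Real.sin_pos_of_pos_of_lt_pi hφpos (by linarith [pi_pos])
    have hP : HasDerivAt (fun y => ∫ x in y..(π/2), Real.sin x ^ ε)
        (-(Real.sin (Real.arcsin ((u t / M) ^ ((p+1)/2))) ^ ε))
        (Real.arcsin ((u t / M) ^ ((p+1)/2))) := by
      apply intervalIntegral.integral_hasDerivAt_left
      · refine hint.mono_set ?_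
        rw [uIcc_of_le (by linarith), uIcc_of_le (by positivity)]
        exact Icc_subset_Icc hφpos.le le_rfl
      · exact ⟨univ, univ_mem,
          (Real.continuous_sin.measurable.pow_const ε).aestronglyMeasurable.restrict⟩
      · exact (Real.continuousAt_rpow_const _ _ (Or.inl hsφ.ne')).comp
          Real.continuous_sin.continuousAt
    have h0 : HasDerivAt (fun s => u s / M) (deriv u t / M) t :=
      (hu_diff t).hasDerivAt.div_const M
    have hv' : HasDerivAt (fun s => (u s / M) ^ ((p+1)/2))
        ((deriv u t / M) * ((p+1)/2) * (u t / M) ^ ((p+1)/2 - 1)) t :=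
      h0.rpow_const (Or.inl hr0.ne')
    have hφ' : HasDerivAt (fun s => Real.arcsin ((u s / M) ^ ((p+1)/2)))
        (1 / Real.sqrt (1 - ((u t / M) ^ ((p+1)/2)) ^ (2:ℕ)) *
          ((deriv u t / M) * ((p+1)/2) * (u t / M) ^ ((p+1)/2 - 1))) t :=
      by have := (Real.hasDerivAt_arcsin (by linarith : (u t / M) ^ ((p+1)/2) ≠ -1) hv1.ne).comp t hv'; exact this
    have hW' := hP.comp t hφ'
    have hWeq : W = (fun y => ∫ x in y..(π/2), Real.sin x ^ ε) ∘
        (fun s => Real.arcsin ((u s / M) ^ ((p+1)/2))) := rfl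
    rw [hWeq]
    refine hW'.congr_deriv (Eq.symm ?_)
    have halg := key_alg hp hM hut0 hutM
    rw [hderiv_formula t ht, hKdef, ← halg]
    ring
  -- mean value theorem
  obtain ⟨c, hc, hslope⟩ := exists_hasDerivAt_eq_slope W (fun _ => K) one_pos hWcont hWderiv
  rw [hW1, hW0] at hslope
  rw [hslope]
  ring

lemma ctilde_eq : ctilde = Real.log 2 - 1/2 := by
  rw [ctilde, num_eq, den_eq, div_one]

theorem main' (u : ℝ → ℝ → ℝ) (hu : ∀ p : ℝ, 1 < p → IsLaneEmden p (u p)) :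
    0 < ctilde ∧
    Tendsto (fun p : ℝ => (u p 0 ^ (p - 1) - π ^ 2 / 4) / (π ^ 2 / 4 * (p - 1)))
      (𝓝[>] (1 : ℝ)) (𝓝 ctilde) := by
  have hπ : (0:ℝ) < π := pi_pos
  have hL2 : (0.6931471803 : ℝ) < Real.log 2 := Real.log_two_gt_d9
  constructor
  · rw [ctilde_eq]; linarith
  rw [ctilde_eq]
  set εf : ℝ → ℝ := fun p => (1-p)/(1+p) with hεf
  have hkey : ∀ p : ℝ, 1 < p → u p 0 ^ (p-1) = (2/(p+1)) * (A (εf p))^(2:ℕ) := by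
    intro p hp
    have hle := lane_emden_key hp (hu p hp)
    have hM : 0 < u p 0 := (hu p hp).2.2.2.2.1 0 (by constructor <;> norm_num)
    have h2 : (A (εf p))^(2:ℕ) = ((p+1)/2) * (u p 0)^(p-1) := by
      rw [hεf]
      dsimp only
      rw [hle, mul_pow, Real.sq_sqrt (by linarith : (0:ℝ) ≤ (p+1)/2)]
      congr 1
      rw [← Real.rpow_natCast ((u p 0)^((p-1)/2)) 2, ← Real.rpow_mul hM.le]
      norm_num
    rw [h2]
    field_simp
  -- epsilon tendsto
  have hεneg : ∀ p : ℝ, 1 < p → εf p < 0 := fun p hp =>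
    div_neg_of_neg_of_pos (by linarith) (by linarith)
  have hεtend : Tendsto εf (𝓝[>] (1:ℝ)) (𝓝[<] (0:ℝ)) := by
    rw [tendsto_nhdsWithin_iff]
    constructor
    · have hc : ContinuousAt εf 1 := by
        apply ContinuousAt.div
        · exact (continuous_const.sub continuous_id).continuousAt
        · exact (continuous_const.add continuous_id).continuousAt
        · norm_num
      have := hc.tendsto.mono_left (nhdsWithin_le_nhds (s := Ioi (1:ℝ)))
      simpa [hεf] using this
    · filter_upwards [self_mem_nhdsWithin] with p hp
      exact hεneg p hp
  have hB : Tendsto (fun p => (A (εf p) - π/2)/(εf p)) (𝓝[>] (1:ℝ))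
      (𝓝 (-(π/2) * Real.log 2)) := by
    have := A_slope_tendsto.comp hεtend
    refine this.congr ?_
    intro p
    simp [Function.comp, A_zero]
  have hA : Tendsto (fun p => A (εf p)) (𝓝[>] (1:ℝ)) (𝓝 (π/2)) := by
    have h0 : Tendsto εf (𝓝[>] (1:ℝ)) (𝓝 0) := hεtend.mono_right nhdsWithin_le_nhds
    have h2 := (h0.mul hB).const_add (π/2)
    rw [zero_mul, add_zero] at h2
    refine Tendsto.congr' ?_ h2
    filter_upwards [self_mem_nhdsWithin] with p hp
    have hne : εf p ≠ 0 := (hεneg p hp).ne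
    field_simp
    ring
  -- the auxiliary expression R
  have hconst1 : Tendsto (fun p : ℝ => -(2/((p+1)^(2:ℕ)))) (𝓝[>] (1:ℝ)) (𝓝 (-(1/2))) := by
    have hc : ContinuousAt (fun p : ℝ => -(2/((p+1)^(2:ℕ)))) 1 := by
      apply ContinuousAt.neg
      apply ContinuousAt.div continuousAt_const
      · exact ((continuous_id.add continuous_const).pow 2).continuousAt
      · norm_num
    have h3 := hc.tendsto.mono_left (nhdsWithin_le_nhds (s := Ioi (1:ℝ)))
    have he : -(2/(((1:ℝ)+1)^(2:ℕ))) = -(1/2) := by norm_num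
    rw [← he]
    exact h3
  have hconst2 : Tendsto (fun p : ℝ => 1/(p+1)) (𝓝[>] (1:ℝ)) (𝓝 (1/2)) := by
    have hc : ContinuousAt (fun p : ℝ => 1/(p+1)) 1 := by
      apply ContinuousAt.div continuousAt_const
      · exact (continuous_id.add continuous_const).continuousAt
      · norm_num
    have h3 := hc.tendsto.mono_left (nhdsWithin_le_nhds (s := Ioi (1:ℝ)))
    have he : (1:ℝ)/((1:ℝ)+1) = 1/2 := by norm_num
    rw [← he]
    exact h3
  have hR : Tendsto (fun p => (-(2/((p+1)^(2:ℕ))) * ((A (εf p) - π/2)/(εf p)))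
      * ((A (εf p) + π/2) * (4/π^(2:ℕ))) - 1/(p+1)) (𝓝[>] (1:ℝ))
      (𝓝 ((-(1/2) * (-(π/2) * Real.log 2)) * ((π/2 + π/2) * (4/π^(2:ℕ))) - 1/2)) :=
    ((hconst1.mul hB).mul ((hA.add tendsto_const_nhds).mul tendsto_const_nhds)).sub hconst2
  have hval : (-(1/2) * (-(π/2) * Real.log 2)) * ((π/2 + π/2) * (4/π^(2:ℕ)))
      - 1/2 = Real.log 2 - 1/2 := by
    field_simp
    ring
  rw [hval] at hR
  refine hR.congr' ?_
  filter_upwards [self_mem_nhdsWithin] with p hp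
  have hp1 : (1:ℝ) < p := hp
  have hne : εf p ≠ 0 := (hεneg p hp1).ne
  have hne1 : p + 1 ≠ 0 := by linarith
  have hne2 : p - 1 ≠ 0 := by intro h; rw [sub_eq_zero] at h; exact absurd h.symm hp1.ne
  have hne3 : (1:ℝ) - p ≠ 0 := by intro h; nlinarith [sub_eq_zero.1 h]
  rw [eq_comm, hkey p hp1]
  rw [hεf] at hne ⊢
  dsimp only at hne ⊢
  field_simp
  ring


end LE1

/-- First-order expansion `‖u_p‖_∞^(p-1) = π²/4 + (π²/4) c̃ (p-1) + o(p-1)` as `p → 1⁺`,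
with `c̃ > 0`. -/
theorem sup_norm_pow_expansion_p_to_one
    (u : ℝ → ℝ → ℝ) (hu : ∀ p : ℝ, 1 < p → IsLaneEmden p (u p)) :
    0 < ctilde ∧
    Tendsto (fun p : ℝ => (u p 0 ^ (p - 1) - π ^ 2 / 4) / (π ^ 2 / 4 * (p - 1)))
      (𝓝[>] (1 : ℝ)) (𝓝 ctilde) :=
  LE1.main' u hu
end
end

section
/- As p → 1⁺, the first eigenvalue of the linearized operator tends to zero: lim_{p→1⁺} α₁(p) = 0. -/
open Real Set Filter Topology

noncomputable section

private lemma aux_deriv_diff {u : ℝ → ℝ} (h : ContDiff ℝ 2 u) : Differentiable ℝ (deriv u) :=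
  ((contDiff_succ_iff_deriv.mp (show ContDiff ℝ (1+1) u by exact_mod_cast h)).2.2).differentiable
    one_ne_zero

private lemma aux_ne_one : ∀ᵐ x : ℝ, x ≠ 1 := by
  rw [MeasureTheory.ae_iff]; simp [not_not]

/-- The key quantitative bound: for `1 < p ≤ 2`, `-(p-1)·8 ≤ α ≤ 0`. -/
private lemma key_bound (p : ℝ) (hp1 : 1 < p) (hp2 : p ≤ 2)
    {u : ℝ → ℝ} {a : ℝ} (hle : IsLaneEmden p u) (heig : IsFirstEig p u a) :
    -((p - 1) * 8) ≤ a ∧ a ≤ 0 := by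
  obtain ⟨hu2, hueq, hum1, hu1, hupos, huev, hudec, humax⟩ := hle
  obtain ⟨w, hw2, hwpos, hwm1, hw1, hweq⟩ := heig
  have hp0 : (0:ℝ) < p := by linarith
  -- regularity facts
  have hcu : Continuous u := hu2.continuous
  have hdu : Differentiable ℝ u := hu2.differentiable (by norm_num)
  have hdu' : Differentiable ℝ (deriv u) := aux_deriv_diff hu2
  have hcu' : Continuous (deriv u) := hdu'.continuous
  have hcu'' : Continuous (deriv (deriv u)) := by
    have := (contDiff_succ_iff_deriv.mp (show ContDiff ℝ (1+1) u by exact_mod_cast hu2)).2.2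
    exact this.continuous_deriv le_rfl
  have hcw : Continuous w := hw2.continuous
  have hdw : Differentiable ℝ w := hw2.differentiable (by norm_num)
  have hdw' : Differentiable ℝ (deriv w) := aux_deriv_diff hw2
  have hcw' : Continuous (deriv w) := hdw'.continuous
  have hcw'' : Continuous (deriv (deriv w)) := by
    have := (contDiff_succ_iff_deriv.mp (show ContDiff ℝ (1+1) w by exact_mod_cast hw2)).2.2
    exact this.continuous_deriv le_rfl
  have hcup : Continuous (fun t => u t ^ p) :=
    (Real.continuous_rpow_const hp0.le).comp hcu
  -- positivity / nonnegativity facts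
  have hU0 : 0 < u 0 := hupos 0 (by constructor <;> norm_num)
  have hU12 : 0 < u (1/2) := hupos (1/2) (by constructor <;> norm_num)
  have hunn : ∀ t ∈ Icc (-1:ℝ) 1, 0 ≤ u t := by
    intro t ht
    rcases ht.1.eq_or_lt with h | h
    · rw [← h, hum1]
    rcases ht.2.eq_or_lt with h2 | h2
    · rw [h2, hu1]
    exact (hupos t ⟨h, h2⟩).le
  have hwnn : ∀ t ∈ Icc (-1:ℝ) 1, 0 ≤ w t := by
    intro t ht
    rcases ht.1.eq_or_lt with h | h
    · rw [← h, hwm1]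
    rcases ht.2.eq_or_lt with h2 | h2
    · rw [h2, hw1]
    exact (hwpos t ⟨h, h2⟩).le
  -- derivative at zero vanishes (evenness)
  have hdu0 : deriv u 0 = 0 := by
    have h1 : deriv (fun t => u (-t)) 0 = -deriv u (-0) := deriv_comp_neg u 0
    rw [funext huev] at h1
    simp only [neg_zero] at h1
    linarith
  -- representation of deriv u on [0,1]
  have hrep : ∀ t ∈ Icc (0:ℝ) 1, deriv u t = -∫ s in (0:ℝ)..t, u s ^ p := by
    intro t ht
    have hftc : ∫ s in (0:ℝ)..t, deriv (deriv u) s = deriv u t - deriv u 0 :=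
      intervalIntegral.integral_deriv_eq_sub (fun x _ => hdu' x)
        (hcu''.intervalIntegrable _ _)
    have hcong : ∫ s in (0:ℝ)..t, deriv (deriv u) s = ∫ s in (0:ℝ)..t, -(u s ^ p) := by
      apply intervalIntegral.integral_congr_ae
      filter_upwards [aux_ne_one] with x hx hxI
      rw [uIoc_of_le ht.1] at hxI
      exact hueq x ⟨by linarith [hxI.1], lt_of_le_of_ne (le_trans hxI.2 ht.2) hx⟩
    rw [hcong, intervalIntegral.integral_neg, hdu0] at hftc
    linarith
  -- deriv u is ≤ -(u(1/2)^p/2) on [1/2,1]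
  have hderiv_le : ∀ t ∈ Icc (1/2:ℝ) 1, deriv u t ≤ -(u (1/2) ^ p / 2) := by
    intro t ht
    have ht' : t ∈ Icc (0:ℝ) 1 := ⟨by linarith [ht.1], ht.2⟩
    rw [hrep t ht']
    have hsplit : (∫ s in (0:ℝ)..t, u s ^ p)
        = (∫ s in (0:ℝ)..(1/2:ℝ), u s ^ p) + ∫ s in (1/2:ℝ)..t, u s ^ p :=
      (intervalIntegral.integral_add_adjacent_intervals (hcup.intervalIntegrable _ _)
        (hcup.intervalIntegrable _ _)).symm
    have h1 : (∫ s in (0:ℝ)..(1/2:ℝ), u (1/2) ^ p) ≤ ∫ s in (0:ℝ)..(1/2:ℝ), u s ^ p := by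
      apply intervalIntegral.integral_mono_on (by norm_num)
        (intervalIntegrable_const) (hcup.intervalIntegrable _ _)
      intro s hs
      exact Real.rpow_le_rpow (hunn _ (by constructor <;> norm_num)) 
        (hudec ⟨hs.1, by linarith [hs.2]⟩ (by constructor <;> norm_num) hs.2) hp0.le
    have h1' : (∫ s in (0:ℝ)..(1/2:ℝ), u (1/2) ^ p) = u (1/2) ^ p / 2 := by
      rw [intervalIntegral.integral_const]; simp; ring
    have h2 : 0 ≤ ∫ s in (1/2:ℝ)..t, u s ^ p := by
      apply intervalIntegral.integral_nonneg ht.1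
      intro s hs
      exact Real.rpow_nonneg (hunn s ⟨by linarith [hs.1], le_trans hs.2 ht.2⟩) p
    rw [hsplit]; rw [h1'] at h1; linarith
  -- the crucial scalar inequality  u(1/2)^p ≤ 4 u(1/2)
  have hkey : u (1/2) ^ p ≤ 4 * u (1/2) := by
    have hftc2 : ∫ t in (1/2:ℝ)..1, deriv u t = u 1 - u (1/2) :=
      intervalIntegral.integral_deriv_eq_sub (fun x _ => hdu x) (hcu'.intervalIntegrable _ _)
    have hmono : (∫ t in (1/2:ℝ)..1, deriv u t) ≤ ∫ t in (1/2:ℝ)..1, -(u (1/2) ^ p / 2) := by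
      apply intervalIntegral.integral_mono_on (by norm_num)
        (hcu'.intervalIntegrable _ _) intervalIntegrable_const
      exact hderiv_le
    have hconst : (∫ t in (1/2:ℝ)..1, -(u (1/2) ^ p / 2)) = -(u (1/2) ^ p / 4) := by
      rw [intervalIntegral.integral_const]; simp; ring
    rw [hftc2, hu1] at hmono
    rw [hconst] at hmono
    linarith
  have hpow4 : u (1/2) ^ (p - 1) ≤ 4 := by
    have h : u (1/2) ^ (p - 1) * u (1/2) ≤ 4 * u (1/2) := by
      have : u (1/2) ^ (p - 1) * u (1/2) = u (1/2) ^ p := by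
        rw [Real.rpow_sub hU12, Real.rpow_one]; field_simp
      rw [this]; exact hkey
    exact le_of_mul_le_mul_right h hU12
  -- concavity gives u(0) ≤ 2 u(1/2)
  have hconc : ConcaveOn ℝ (Icc (-1:ℝ) 1) u := by
    apply concaveOn_of_deriv2_nonpos (convex_Icc _ _) hcu.continuousOn
      hdu.differentiableOn hdu'.differentiableOn
    intro x hx
    rw [interior_Icc] at hx
    have : deriv^[2] u x = deriv (deriv u) x := by
      simp [Function.iterate_succ, Function.iterate_zero]
    rw [this, hueq x hx]
    exact neg_nonpos.mpr (Real.rpow_nonneg (hupos x hx).le p)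
  have hhalf : u 0 ≤ 2 * u (1/2) := by
    have h := hconc.2 (show (0:ℝ) ∈ Icc (-1:ℝ) 1 by constructor <;> norm_num)
      (show (1:ℝ) ∈ Icc (-1:ℝ) 1 by constructor <;> norm_num)
      (by norm_num : (0:ℝ) ≤ (1/2:ℝ)) (by norm_num : (0:ℝ) ≤ (1/2:ℝ)) (by norm_num)
    simp only [smul_eq_mul] at h
    norm_num at h
    rw [hu1] at h
    linarith
  -- pointwise bound u^p ≤ 8 u on [-1,1]
  have hMb : ∀ t ∈ Icc (-1:ℝ) 1, u t ^ p ≤ 8 * u t := by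
    intro t ht
    rcases (hunn t ht).eq_or_lt with h0 | h0
    · rw [← h0, Real.zero_rpow (ne_of_gt hp0)]; norm_num
    · have h1 : u t ^ p = u t ^ (p-1) * u t := by
        rw [Real.rpow_sub h0, Real.rpow_one]; field_simp
      have h2 : u t ^ (p-1) ≤ (2 * u (1/2)) ^ (p-1) :=
        Real.rpow_le_rpow h0.le (le_trans (humax t ht) hhalf) (by linarith)
      have h3 : (2 * u (1/2)) ^ (p-1) = 2 ^ (p-1) * u (1/2) ^ (p-1) :=
        Real.mul_rpow (by norm_num) hU12.le
      have h4 : (2:ℝ) ^ (p-1) ≤ 2 := by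
        calc (2:ℝ) ^ (p-1) ≤ 2 ^ (1:ℝ) :=
              Real.rpow_le_rpow_of_exponent_le one_le_two (by linarith)
        _ = 2 := Real.rpow_one 2
      have h5 : (0:ℝ) ≤ u (1/2) ^ (p-1) := Real.rpow_nonneg hU12.le _
      have h6 : (0:ℝ) ≤ (2:ℝ) ^ (p-1) := Real.rpow_nonneg (by norm_num) _
      have h7 : u t ^ (p-1) ≤ 8 := by nlinarith
      rw [h1]
      nlinarith
  -- Green's identity
  have hgderiv : ∀ t : ℝ, HasDerivAt (fun s => deriv u s * w s - deriv w s * u s)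
      (deriv (deriv u) t * w t - deriv (deriv w) t * u t) t := by
    intro t
    have h1 : HasDerivAt (deriv u) (deriv (deriv u) t) t := (hdu' t).hasDerivAt
    have h2 : HasDerivAt u (deriv u t) t := (hdu t).hasDerivAt
    have h3 : HasDerivAt (deriv w) (deriv (deriv w) t) t := (hdw' t).hasDerivAt
    have h4 : HasDerivAt w (deriv w t) t := (hdw t).hasDerivAt
    have := (h1.mul h4).sub (h3.mul h2)
    convert this using 1
    case e'_8 => rfl
    case e'_9 => ring
    all_goals rfl
  have hgint : (∫ t in (-1:ℝ)..1, (deriv (deriv u) t * w t - deriv (deriv w) t * u t)) = 0 := by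
    rw [intervalIntegral.integral_eq_sub_of_hasDerivAt (fun x _ => hgderiv x)
      (((hcu''.mul hcw).sub (hcw''.mul hcu)).intervalIntegrable _ _)]
    simp [hu1, hw1, hum1, hwm1]
  have hcongr : (∫ t in (-1:ℝ)..1, (deriv (deriv u) t * w t - deriv (deriv w) t * u t))
      = ∫ t in (-1:ℝ)..1, ((p-1) * (u t ^ p * w t) + a * (u t * w t)) := by
    apply intervalIntegral.integral_congr_ae
    filter_upwards [aux_ne_one] with x hx hxI
    rw [uIoc_of_le (by norm_num : (-1:ℝ) ≤ 1)] at hxI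
    have hxm : x ∈ Ioo (-1:ℝ) 1 := ⟨hxI.1, lt_of_le_of_ne hxI.2 hx⟩
    have h1 := hueq x hxm
    have h2 := hweq x hxm
    have h2' : deriv (deriv w) x = -(p * u x ^ (p-1) * w x) - a * w x := by linarith
    rw [h1, h2']
    have h3 : u x ^ (p - 1) * u x = u x ^ p := by
      rw [Real.rpow_sub (hupos x hxm), Real.rpow_one]
      exact div_mul_cancel₀ _ (ne_of_gt (hupos x hxm))
    linear_combination (p * w x) * h3
  have hIJ : (p-1) * (∫ t in (-1:ℝ)..1, u t ^ p * w t) + a * (∫ t in (-1:ℝ)..1, u t * w t) = 0 := by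
    have := hgint
    rw [hcongr] at this
    rw [intervalIntegral.integral_add (f := fun t => (p-1) * (u t ^ p * w t)) (g := fun t => a * (u t * w t)) (((continuous_const.mul (hcup.mul hcw))).intervalIntegrable _ _)
      ((continuous_const.mul (hcu.mul hcw)).intervalIntegrable _ _),
      intervalIntegral.integral_const_mul, intervalIntegral.integral_const_mul] at this
    exact this
  -- positivity of ∫ u w
  have hIpos : 0 < ∫ t in (-1:ℝ)..1, u t * w t := by
    apply intervalIntegral.intervalIntegral_pos_of_pos_on ((hcu.mul hcw).intervalIntegrable _ _)
    · intro x hx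
      exact mul_pos (hupos x hx) (hwpos x hx)
    · norm_num
  have hJnn : 0 ≤ ∫ t in (-1:ℝ)..1, u t ^ p * w t := by
    apply intervalIntegral.integral_nonneg (by norm_num : (-1:ℝ) ≤ 1)
    intro s hs
    exact mul_nonneg (Real.rpow_nonneg (hunn s hs) p) (hwnn s hs)
  have hJle : (∫ t in (-1:ℝ)..1, u t ^ p * w t) ≤ 8 * ∫ t in (-1:ℝ)..1, u t * w t := by
    rw [← intervalIntegral.integral_const_mul]
    apply intervalIntegral.integral_mono_on (by norm_num : (-1:ℝ) ≤ 1)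
      ((hcup.mul hcw).intervalIntegrable _ _)
      ((continuous_const.mul (hcu.mul hcw)).intervalIntegrable _ _)
    intro t ht
    have := mul_le_mul_of_nonneg_right (hMb t ht) (hwnn t ht)
    show u t ^ p * w t ≤ 8 * (u t * w t)
    linarith [this]
  constructor
  · nlinarith
  · nlinarith

/-- As `p → 1⁺`, the first eigenvalue of the linearized operator tends to `0`. -/
theorem first_eigenvalue_tendsto_zero
    (u : ℝ → ℝ → ℝ) (α : ℝ → ℝ)
    (hu : ∀ p : ℝ, 1 < p → IsLaneEmden p (u p))
    (hα : ∀ p : ℝ, 1 < p → IsFirstEig p (u p) (α p)) :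
    Tendsto α (𝓝[>] (1 : ℝ)) (𝓝 0) := by
  have hbound : ∀ᶠ p in 𝓝[>] (1:ℝ), -((p-1)*8) ≤ α p ∧ α p ≤ 0 := by
    filter_upwards [Ioc_mem_nhdsGT (by norm_num : (1:ℝ) < 2)] with p hp
    exact key_bound p hp.1 hp.2 (hu p hp.1) (hα p hp.1)
  have hlow : Tendsto (fun p : ℝ => -((p-1)*8)) (𝓝[>] (1:ℝ)) (𝓝 0) := by
    have h : Tendsto (fun p : ℝ => -((p-1)*8)) (𝓝 (1:ℝ)) (𝓝 (-(((1:ℝ)-1)*8))) := by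
      apply Continuous.tendsto
      continuity
    norm_num at h
    exact h.mono_left nhdsWithin_le_nhds
  exact tendsto_of_tendsto_of_tendsto_of_le_of_le' hlow tendsto_const_nhds
    (hbound.mono fun p hp => hp.1) (hbound.mono fun p hp => hp.2)
end
end

section
/- Let p > 1 and let λ > 0 satisfy λ > -α₁(p). If h is a C² function on [0,1] solving h'' = (λ - p·u_p^{p-1})·h on (0,1) with h'(0) = 0 and h(1) = -u_p'(1), then h is strictly positive on [0,1]. -/
open Real Set Filter Topology

noncomputable section

/-- A `C²` function and its derivative are differentiable. -/
lemma aux_diff2 {f : ℝ → ℝ} (hf : ContDiff ℝ 2 f) :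
    Differentiable ℝ f ∧ Differentiable ℝ (deriv f) := by
  have h2 : ContDiff ℝ ((1 : ℕ∞) + 1) f := by norm_num; exact hf
  have := (contDiff_succ_iff_deriv (n := 1)).mp h2
  exact ⟨this.1, this.2.2.differentiable one_ne_zero⟩

/-- A continuous function positive at `0`, nonpositive somewhere in `[0,1]` and nonzero
at `1` has a first zero in `(0,1)`. -/
lemma aux_exists_first_zero {f : ℝ → ℝ} (hf : Continuous f) (h0 : 0 < f 0)
    (hs : ∃ t ∈ Icc (0:ℝ) 1, f t ≤ 0) (h1 : f 1 ≠ 0) :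
    ∃ t0 ∈ Ioo (0:ℝ) 1, f t0 = 0 ∧ ∀ t ∈ Ico (0:ℝ) t0, 0 < f t := by
  set S : Set ℝ := Icc 0 1 ∩ {t | f t ≤ 0} with hS
  have hSne : S.Nonempty := by obtain ⟨t, ht, hft⟩ := hs; exact ⟨t, ht, hft⟩
  have hSc : IsClosed S := isClosed_Icc.inter (isClosed_le hf continuous_const)
  have hSbd : BddBelow S := (bddBelow_Icc : BddBelow (Icc (0:ℝ) 1)).mono inter_subset_left
  set t0 := sInf S with ht0def
  have ht0S : t0 ∈ S := hSc.csInf_mem hSne hSbd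
  have ht00 : 0 ≤ t0 := ht0S.1.1
  have ht01 : t0 ≤ 1 := ht0S.1.2
  have hlow : ∀ t ∈ Ico (0:ℝ) t0, 0 < f t := by
    intro t ht
    by_contra hc
    push_neg at hc
    have : t0 ≤ t := csInf_le hSbd ⟨⟨ht.1, ht.2.le.trans ht01⟩, hc⟩
    linarith [ht.2]
  have ht0pos : 0 < t0 := by
    rcases lt_or_eq_of_le ht00 with h | h
    · exact h
    · exfalso; have := ht0S.2; rw [← h] at this; exact absurd this (not_le.mpr h0)
  have hftz : f t0 = 0 := by
    have htend : Tendsto f (𝓝[<] t0) (𝓝 (f t0)) :=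
      (hf.tendsto t0).mono_left nhdsWithin_le_nhds
    have hev : ∀ᶠ y in 𝓝[<] t0, 0 ≤ f y := by
      filter_upwards [Ioo_mem_nhdsLT_of_mem ⟨ht0pos, le_rfl⟩] with y hy
      exact (hlow y ⟨hy.1.le, hy.2⟩).le
    have : 0 ≤ f t0 := ge_of_tendsto htend hev
    exact le_antisymm ht0S.2 this
  have ht0lt : t0 < 1 := lt_of_le_of_ne ht01 (fun he => h1 (he ▸ hftz))
  exact ⟨t0, ⟨ht0pos, ht0lt⟩, hftz, hlow⟩

/-- Sturm-type comparison via the Wronskian: `h` cannot have a first zero in `(0,1)`. -/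
lemma aux_wronskian_key {p lam α : ℝ} (hpα : 0 < lam + α) {u g h : ℝ → ℝ}
    (hg : ContDiff ℝ 2 g) (hh : ContDiff ℝ 2 h)
    (hgeq : ∀ t ∈ Ioo (0:ℝ) 1, deriv (deriv g) t = -((α + p * u t ^ (p-1)) * g t))
    (hheq : ∀ t ∈ Ioo (0:ℝ) 1, deriv (deriv h) t = (lam - p * u t ^ (p-1)) * h t)
    (hgpos : ∀ t ∈ Ico (0:ℝ) 1, 0 < g t)
    (hh0 : deriv h 0 = 0) (hg0 : deriv g 0 = 0)
    {t0 : ℝ} (ht0 : t0 ∈ Ioo (0:ℝ) 1) (hht0 : h t0 = 0)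
    (hpos : ∀ t ∈ Ico (0:ℝ) t0, 0 < h t) : False := by
  obtain ⟨hdg, hdg'⟩ := aux_diff2 hg
  obtain ⟨hdh, hdh'⟩ := aux_diff2 hh
  set W : ℝ → ℝ := fun t => deriv h t * g t - h t * deriv g t with hWdef
  have hWd : ∀ t : ℝ, HasDerivAt W
      (deriv (deriv h) t * g t - h t * deriv (deriv g) t) t := by
    intro t
    have h1 : HasDerivAt (fun s => deriv h s * g s)
        (deriv (deriv h) t * g t + deriv h t * deriv g t) t :=
      ((hdh' t).hasDerivAt).mul ((hdg t).hasDerivAt)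
    have h2 : HasDerivAt (fun s => h s * deriv g s)
        (deriv h t * deriv g t + h t * deriv (deriv g) t) t :=
      ((hdh t).hasDerivAt).mul ((hdg' t).hasDerivAt)
    have := h1.fun_sub h2
    refine this.congr_deriv ?_
    ring
  have hWc : Continuous W :=
    ((hdh'.continuous.mul hdg.continuous).sub (hdh.continuous.mul hdg'.continuous))
  have hWpos : ∀ t ∈ interior (Icc (0:ℝ) t0), 0 < deriv W t := by
    intro t ht
    rw [interior_Icc] at ht
    have ht1 : t ∈ Ioo (0:ℝ) 1 := ⟨ht.1, lt_trans ht.2 ht0.2⟩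
    rw [(hWd t).deriv, hheq t ht1, hgeq t ht1]
    have hht : 0 < h t := hpos t ⟨ht.1.le, ht.2⟩
    have hgt : 0 < g t := hgpos t ⟨ht.1.le, ht1.2⟩
    have : (lam - p * u t ^ (p-1)) * h t * g t - h t * -((α + p * u t ^ (p-1)) * g t)
        = (lam + α) * (h t * g t) := by ring
    rw [this]
    positivity
  have hmono : StrictMonoOn W (Icc 0 t0) :=
    strictMonoOn_of_deriv_pos (convex_Icc 0 t0) hWc.continuousOn hWpos
  have hW0 : W 0 = 0 := by simp [hWdef, hh0, hg0]
  have hWt0pos : 0 < W t0 := by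
    have := hmono (left_mem_Icc.mpr ht0.1.le) (right_mem_Icc.mpr ht0.1.le) ht0.1
    rwa [hW0] at this
  have hdh_t0 : deriv h t0 ≤ 0 := by
    have hda := (hdh t0).hasDerivAt
    rw [hasDerivAt_iff_tendsto_slope] at hda
    have hda' : Tendsto (slope h t0) (𝓝[<] t0) (𝓝 (deriv h t0)) :=
      hda.mono_left (nhdsWithin_mono _ (fun y hy => ne_of_lt hy))
    have hev : ∀ᶠ y in 𝓝[<] t0, slope h t0 y ≤ 0 := by
      filter_upwards [Ioo_mem_nhdsLT_of_mem ⟨ht0.1, le_rfl⟩] with y hy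
      rw [slope_def_field]
      have h1 : 0 ≤ h y := (hpos y ⟨hy.1.le, hy.2⟩).le
      have h2 : y - t0 ≤ 0 := by linarith [hy.2]
      rw [hht0]
      exact div_nonpos_of_nonneg_of_nonpos (by linarith) h2
    exact le_of_tendsto hda' hev
  have : W t0 ≤ 0 := by
    have : W t0 = deriv h t0 * g t0 := by simp [hWdef, hht0]
    rw [this]
    exact mul_nonpos_of_nonpos_of_nonneg hdh_t0 (hgpos t0 ⟨ht0.1.le, ht0.2⟩).le
  linarith

/-- Gronwall-type uniqueness: a solution of a linear second order ODE with bounded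
coefficient vanishing to first order at `0` vanishes at `1`. -/
lemma aux_gronwall_zero {h q : ℝ → ℝ} (hh : ContDiff ℝ 2 h)
    (hheq : ∀ t ∈ Ioo (0:ℝ) 1, deriv (deriv h) t = q t * h t)
    (hq : ∃ C : ℝ, ∀ t ∈ Ioo (0:ℝ) 1, |q t| ≤ C)
    (h0 : h 0 = 0) (h0' : deriv h 0 = 0) : h 1 = 0 := by
  obtain ⟨hdh, hdh'⟩ := aux_diff2 hh
  obtain ⟨C, hC⟩ := hq
  set K : ℝ := 1 + |C| with hKdef
  set F : ℝ → ℝ := fun t => h t ^ 2 + deriv h t ^ 2 with hFdef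
  have hFd : ∀ t : ℝ, HasDerivAt F
      (2 * h t * deriv h t + 2 * deriv h t * deriv (deriv h) t) t := by
    intro t
    have h1 : HasDerivAt (fun s => h s ^ 2) (2 * h t * deriv h t) t := by
      have := ((hdh t).hasDerivAt).fun_pow 2
      refine this.congr_deriv ?_; ring
    have h2 : HasDerivAt (fun s => deriv h s ^ 2) (2 * deriv h t * deriv (deriv h) t) t := by
      have := ((hdh' t).hasDerivAt).fun_pow 2
      refine this.congr_deriv ?_; ring
    exact h1.add h2
  set G : ℝ → ℝ := fun t => F t * Real.exp (-K * t) with hGdef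
  have hGd : ∀ t : ℝ, HasDerivAt G
      ((2 * h t * deriv h t + 2 * deriv h t * deriv (deriv h) t) * Real.exp (-K * t)
        + F t * (Real.exp (-K * t) * (-K))) t := by
    intro t
    have he : HasDerivAt (fun s : ℝ => Real.exp (-K * s)) (Real.exp (-K * t) * (-K)) t := by
      have h1 : HasDerivAt (fun s : ℝ => -K * s) (-K * 1) t := (hasDerivAt_id t).const_mul (-K)
      rw [mul_one] at h1
      exact h1.exp
    exact (hFd t).mul he
  have hFc : Continuous F := (hdh.continuous.pow 2).add (hdh'.continuous.pow 2)
  have hGc : Continuous G := hFc.mul (Real.continuous_exp.comp (continuous_const.mul continuous_id))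
  have hGanti : AntitoneOn G (Icc 0 1) := by
    apply antitoneOn_of_deriv_nonpos (convex_Icc 0 1) hGc.continuousOn
    · intro t _
      exact (hGd t).differentiableAt.differentiableWithinAt
    · intro t ht
      rw [interior_Icc] at ht
      rw [(hGd t).deriv]
      have hqt : |q t| ≤ C := hC t ht
      have hqK : |1 + q t| ≤ K := by
        calc |1 + q t| ≤ |1| + |q t| := abs_add_le _ _
        _ ≤ 1 + |C| := by rw [abs_one]; linarith [le_abs_self C]
        _ = K := rfl
      have hbound : 2 * h t * deriv h t + 2 * deriv h t * deriv (deriv h) t ≤ K * F t := by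
        rw [hheq t ht]
        have e1 : 2 * h t * deriv h t + 2 * deriv h t * (q t * h t)
            = 2 * (h t * deriv h t) * (1 + q t) := by ring
        rw [e1]
        have habs : 2 * (h t * deriv h t) * (1 + q t) ≤ |2 * (h t * deriv h t)| * |1 + q t| := by
          calc 2 * (h t * deriv h t) * (1 + q t) ≤ |2 * (h t * deriv h t) * (1 + q t)| :=
              le_abs_self _
          _ = |2 * (h t * deriv h t)| * |1 + q t| := abs_mul _ _
        have hsq : |2 * (h t * deriv h t)| ≤ F t := by
          have h2 := two_mul_le_add_sq |h t| |deriv h t|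
          rw [sq_abs, sq_abs] at h2
          calc |2 * (h t * deriv h t)| = 2 * (|h t| * |deriv h t|) := by
                rw [abs_mul, abs_mul]; simp [abs_of_nonneg]
          _ ≤ h t ^ 2 + deriv h t ^ 2 := by linarith
          _ = F t := rfl
        calc 2 * (h t * deriv h t) * (1 + q t) ≤ |2 * (h t * deriv h t)| * |1 + q t| := habs
        _ ≤ F t * K := mul_le_mul hsq hqK (abs_nonneg _) (by positivity)
        _ = K * F t := mul_comm _ _
      have hexp : 0 < Real.exp (-K * t) := Real.exp_pos _
      have : (2 * h t * deriv h t + 2 * deriv h t * deriv (deriv h) t) * Real.exp (-K * t)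
          + F t * (Real.exp (-K * t) * (-K))
          = (2 * h t * deriv h t + 2 * deriv h t * deriv (deriv h) t - K * F t)
            * Real.exp (-K * t) := by ring
      rw [this]
      exact mul_nonpos_of_nonpos_of_nonneg (by linarith) hexp.le
  have hG0 : G 0 = 0 := by simp [hGdef, hFdef, h0, h0']
  have hG1 : G 1 ≤ 0 := by
    have := hGanti (left_mem_Icc.mpr zero_le_one) (right_mem_Icc.mpr zero_le_one) zero_le_one
    rwa [hG0] at this
  have hF1 : F 1 ≤ 0 := by
    have hexp : 0 < Real.exp (-K * 1) := Real.exp_pos _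
    by_contra hc
    push_neg at hc
    have : 0 < G 1 := by
      simp only [hGdef]
      positivity
    linarith
  have : h 1 ^ 2 ≤ 0 := by
    have : 0 ≤ deriv h 1 ^ 2 := sq_nonneg _
    simp only [hFdef] at hF1
    linarith
  nlinarith [sq_nonneg (h 1)]

/-- The derivative of the Lane–Emden solution at `1` is negative. -/
lemma aux_deriv_u_neg {p : ℝ} {u : ℝ → ℝ}
    (huC : ContDiff ℝ 2 u)
    (hueq : ∀ t ∈ Ioo (-1 : ℝ) 1, deriv (deriv u) t = -(u t ^ p))
    (hu1 : u 1 = 0)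
    (hupos : ∀ t ∈ Ioo (-1 : ℝ) 1, 0 < u t) :
    deriv u 1 < 0 := by
  obtain ⟨hdu, hdu'⟩ := aux_diff2 huC
  have hanti : StrictAntiOn (deriv u) (Icc 0 1) := by
    apply strictAntiOn_of_deriv_neg (convex_Icc 0 1) (hdu'.continuous.continuousOn)
    intro x hx
    rw [interior_Icc] at hx
    have hx' : x ∈ Ioo (-1:ℝ) 1 := ⟨by linarith [hx.1], hx.2⟩
    rw [hueq x hx']
    have := Real.rpow_pos_of_pos (hupos x hx') p
    linarith
  obtain ⟨c, hc, hceq⟩ := exists_hasDerivAt_eq_slope u (deriv u) zero_lt_one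
    (hdu.continuous.continuousOn) (fun x _ => (hdu x).hasDerivAt)
  have hu0 : 0 < u 0 := hupos 0 ⟨by norm_num, by norm_num⟩
  have : deriv u c = -u 0 := by rw [hceq, hu1]; ring
  have h1c : deriv u 1 < deriv u c :=
    hanti ⟨hc.1.le, hc.2.le⟩ (right_mem_Icc.mpr zero_le_one) hc.2
  linarith

/-- Symmetrization of the first eigenfunction: an even positive eigenfunction with
vanishing derivative at `0`. -/
lemma aux_sym_eigen {p α : ℝ} {u w : ℝ → ℝ}
    (huev : ∀ t : ℝ, u (-t) = u t)
    (hwC : ContDiff ℝ 2 w)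
    (hwpos : ∀ t ∈ Ioo (-1 : ℝ) 1, 0 < w t)
    (hweq : ∀ t ∈ Ioo (-1 : ℝ) 1,
      -(deriv (deriv w) t) - p * u t ^ (p - 1) * w t = α * w t) :
    ∃ g : ℝ → ℝ, ContDiff ℝ 2 g ∧
      (∀ t ∈ Ioo (0:ℝ) 1, deriv (deriv g) t = -((α + p * u t ^ (p-1)) * g t)) ∧
      (∀ t ∈ Ico (0:ℝ) 1, 0 < g t) ∧ deriv g 0 = 0 := by
  obtain ⟨hdw, hdw'⟩ := aux_diff2 hwC
  set g : ℝ → ℝ := fun t => w t + w (-t) with hgdef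
  have hgC : ContDiff ℝ 2 g := hwC.add (hwC.comp contDiff_neg)
  have hderivg : deriv g = fun t => deriv w t - deriv w (-t) := by
    funext t
    have h1 : deriv g t = deriv w t + deriv (fun s => w (-s)) t := by
      apply deriv_add (hdw t)
      exact ((hdw (-t)).comp t (differentiable_neg t))
    rw [h1, deriv_comp_neg]
    ring
  have hg0 : deriv g 0 = 0 := by rw [hderivg]; simp
  refine ⟨g, hgC, ?_, ?_, hg0⟩
  · intro t ht
    have ht1 : t ∈ Ioo (-1:ℝ) 1 := ⟨by linarith [ht.1], ht.2⟩
    have ht2 : -t ∈ Ioo (-1:ℝ) 1 := ⟨by linarith [ht.2], by linarith [ht.1]⟩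
    have hd2 : deriv (deriv g) t = deriv (deriv w) t + deriv (deriv w) (-t) := by
      rw [hderivg]
      have hcomp : DifferentiableAt ℝ (fun s => deriv w (-s)) t :=
        (hdw' (-t)).comp t (differentiable_neg t)
      rw [deriv_fun_sub (hdw' t) hcomp, deriv_comp_neg]
      ring
    have e1 := hweq t ht1
    have e2 := hweq (-t) ht2
    rw [huev t] at e2
    rw [hd2]
    simp only [hgdef]
    linarith
  · intro t ht
    have ht1 : t ∈ Ioo (-1:ℝ) 1 := ⟨by linarith [ht.1], ht.2⟩
    have ht2 : -t ∈ Ioo (-1:ℝ) 1 := ⟨by linarith [ht.2], by linarith [ht.1]⟩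
    exact add_pos (hwpos t ht1) (hwpos (-t) ht2)

/-- Positivity of the solution `h` of the auxiliary problem
`h'' = (λ - p u_p^(p-1)) h`, `h'(0) = 0`, `h(1) = -u_p'(1)`, when `λ > -α₁(p)`. -/
theorem auxiliary_solution_positive
    (p : ℝ) (hp : 1 < p) (u : ℝ → ℝ) (hu : IsLaneEmden p u)
    (α : ℝ) (hα : IsFirstEig p u α)
    (lam : ℝ) (hlam : 0 < lam) (hlamα : -α < lam)
    (h : ℝ → ℝ) (hh : ContDiff ℝ 2 h)
    (hheq : ∀ t ∈ Ioo (0 : ℝ) 1, deriv (deriv h) t = (lam - p * u t ^ (p - 1)) * h t)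
    (hh0 : deriv h 0 = 0) (hh1 : h 1 = -(deriv u 1)) :
    ∀ t ∈ Icc (0 : ℝ) 1, 0 < h t := by
  obtain ⟨huC, hueq, hum1, hu1, hupos, huev, humono, humax⟩ := hu
  obtain ⟨w, hwC, hwpos, hwm1, hw1, hweq⟩ := hα
  have hlamα' : 0 < lam + α := by linarith
  have hdu1 : deriv u 1 < 0 := aux_deriv_u_neg huC hueq hu1 hupos
  have hh1pos : 0 < h 1 := by rw [hh1]; linarith
  obtain ⟨g, hgC, hgeq, hgpos, hg0⟩ := aux_sym_eigen huev hwC hwpos hweq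
  by_contra hcon
  push_neg at hcon
  obtain ⟨t1, ht1, hht1⟩ := hcon
  rcases lt_trichotomy (h 0) 0 with hneg | hzero | hposi
  · -- h 0 < 0 : apply the key lemma to -h
    obtain ⟨t0, ht0, hft0, hlow⟩ := aux_exists_first_zero (f := fun t => -h t)
      (hh.continuous.neg) (by simpa using hneg)
      ⟨1, right_mem_Icc.mpr zero_le_one, by simpa using hh1pos.le⟩
      (by simpa using (ne_of_lt (neg_neg_of_pos hh1pos)))
    have hnegC : ContDiff ℝ 2 (fun t => -h t) := hh.neg
    have hderivneg : deriv (fun t => -h t) = fun t => -deriv h t := by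
      funext x; exact deriv.neg
    refine aux_wronskian_key hlamα' hgC hnegC hgeq ?_ hgpos ?_ hg0 ht0 hft0 hlow
    · intro t ht
      rw [hderivneg]
      have : deriv (fun t => -deriv h t) t = -deriv (deriv h) t := deriv.neg
      rw [this, hheq t ht]
      ring
    · rw [hderivneg]
      simp [hh0]
  · -- h 0 = 0 : Gronwall uniqueness gives h 1 = 0
    have hbd : ∃ C : ℝ, ∀ t ∈ Ioo (0:ℝ) 1, |lam - p * u t ^ (p - 1)| ≤ C := by
      refine ⟨|lam| + p * u 0 ^ (p - 1), fun t ht => ?_⟩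
      have ht1 : t ∈ Ioo (-1:ℝ) 1 := ⟨by linarith [ht.1], ht.2⟩
      have hut : 0 < u t := hupos t ht1
      have hle : u t ≤ u 0 := humax t ⟨by linarith [ht.1], ht.2.le⟩
      have hrpow : u t ^ (p - 1) ≤ u 0 ^ (p - 1) :=
        Real.rpow_le_rpow hut.le hle (by linarith)
      have hq0 : 0 ≤ p * u t ^ (p - 1) := by
        have := Real.rpow_nonneg hut.le (p - 1)
        positivity
      calc |lam - p * u t ^ (p - 1)| ≤ |lam| + |p * u t ^ (p - 1)| := abs_sub lam _
      _ = |lam| + p * u t ^ (p - 1) := by rw [abs_of_nonneg hq0]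
      _ ≤ |lam| + p * u 0 ^ (p - 1) := by
          have : p * u t ^ (p - 1) ≤ p * u 0 ^ (p - 1) :=
            mul_le_mul_of_nonneg_left hrpow (by linarith)
          linarith
    have := aux_gronwall_zero hh (q := fun t => lam - p * u t ^ (p - 1)) hheq hbd hzero hh0
    linarith
  · -- h 0 > 0 : apply the key lemma to h
    obtain ⟨t0, ht0, hft0, hlow⟩ := aux_exists_first_zero hh.continuous hposi
      ⟨t1, ht1, hht1⟩ (ne_of_gt hh1pos)
    exact aux_wronskian_key hlamα' hgC hh hgeq hheq hgpos hh0 hg0 ht0 hft0 hlow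
end
end
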